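/- arXiv:1211.2144 — 9 statements merged into one kernel-verified Lean document; each statement's English description precedes it below -/
import Mathlib

section
/- Let n ≥ 1 and let ≈ be the equivalence relation on (ℤ/nℤ) × (ℤ/nℤ) generated by (g,k) ≈ (g, k+g) and (g,k) ≈ (k, −g). For p, q ∈ ℤ/nℤ, one has (p,0) ≈ (q,0) if and only if the cyclic subgroups generated by p and by q in ℤ/nℤ are equal, i.e. ⟨p⟩ = ⟨q⟩. -/
/-- The base relation on `(ℤ/nℤ) × (ℤ/nℤ)`: `(g,k) ↦ (g, k+g)` and `(g,k) ↦ (k, -g)`. -/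
def baseRel (n : ℕ) : (ZMod n × ZMod n) → (ZMod n × ZMod n) → Prop :=
  fun x y => y = (x.1, x.2 + x.1) ∨ y = (x.2, -x.1)

lemma mem_pair_closure_left {n : ℕ} (a b : ZMod n) :
    a ∈ AddSubgroup.closure ({a, b} : Set (ZMod n)) :=
  AddSubgroup.subset_closure (by simp)

lemma mem_pair_closure_right {n : ℕ} (a b : ZMod n) :
    b ∈ AddSubgroup.closure ({a, b} : Set (ZMod n)) :=
  AddSubgroup.subset_closure (by simp)

/-- The subgroup generated by both coordinates is invariant under `baseRel`. -/
lemma closure_inv {n : ℕ} {x y : ZMod n × ZMod n} (h : baseRel n x y) :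
    AddSubgroup.closure ({x.1, x.2} : Set (ZMod n)) =
      AddSubgroup.closure ({y.1, y.2} : Set (ZMod n)) := by
  obtain ⟨g, k⟩ := x
  rcases h with rfl | rfl
  · apply le_antisymm
    · rw [AddSubgroup.closure_le]
      intro a ha
      simp only [Set.mem_insert_iff, Set.mem_singleton_iff] at ha
      rcases ha with rfl | rfl
      · exact mem_pair_closure_left _ _
      · have h1 := mem_pair_closure_right g (a + g)
        have h2 := mem_pair_closure_left g (a + g)
        simpa using AddSubgroup.sub_mem _ h1 h2
    · rw [AddSubgroup.closure_le]
      intro a ha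
      simp only [Set.mem_insert_iff, Set.mem_singleton_iff] at ha
      rcases ha with rfl | rfl
      · exact mem_pair_closure_left _ _
      · exact AddSubgroup.add_mem _ (mem_pair_closure_right g k) (mem_pair_closure_left g k)
  · apply le_antisymm
    · rw [AddSubgroup.closure_le]
      intro a ha
      simp only [Set.mem_insert_iff, Set.mem_singleton_iff] at ha
      rcases ha with rfl | rfl
      · simpa using AddSubgroup.neg_mem _ (mem_pair_closure_right k (-a))
      · exact mem_pair_closure_left _ _
    · rw [AddSubgroup.closure_le]
      intro a ha
      simp only [Set.mem_insert_iff, Set.mem_singleton_iff] at ha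
      rcases ha with rfl | rfl
      · exact mem_pair_closure_right _ _
      · exact AddSubgroup.neg_mem _ (mem_pair_closure_left _ _)

lemma closure_pair_zero {n : ℕ} (p : ZMod n) :
    AddSubgroup.closure ({p, 0} : Set (ZMod n)) = AddSubgroup.zmultiples p := by
  rw [AddSubgroup.zmultiples_eq_closure]
  apply le_antisymm
  · rw [AddSubgroup.closure_le]
    intro a ha
    simp only [Set.mem_insert_iff, Set.mem_singleton_iff] at ha
    rcases ha with rfl | rfl
    · exact AddSubgroup.subset_closure rfl
    · exact AddSubgroup.zero_mem _
  · exact AddSubgroup.closure_mono (by simp)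

lemma eqvgen_add_nsmul {n : ℕ} (g k : ZMod n) (m : ℕ) :
    Relation.EqvGen (baseRel n) (g, k) (g, k + m • g) := by
  induction m with
  | zero => simpa using Relation.EqvGen.refl _
  | succ m ih =>
    refine Relation.EqvGen.trans _ _ _ ih (Relation.EqvGen.rel _ _ ?_)
    left
    simp [succ_nsmul, add_assoc, add_mul]

lemma exists_nsmul_of_mem_zmultiples {n : ℕ} (hn : 1 ≤ n) {g x : ZMod n}
    (hx : x ∈ AddSubgroup.zmultiples g) : ∃ m : ℕ, m • g = x := by
  obtain ⟨z, rfl⟩ := AddSubgroup.mem_zmultiples_iff.mp hx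
  refine ⟨(z % (n : ℤ)).toNat, ?_⟩
  have hn0 : (n : ℤ) ≠ 0 := by exact_mod_cast (Nat.succ_le_iff.mp hn).ne'
  have h1 : ((z % (n : ℤ)).toNat : ℤ) = z % (n : ℤ) :=
    Int.toNat_of_nonneg (Int.emod_nonneg z hn0)
  have hng : (n : ℤ) • g = 0 := by
    rw [natCast_zsmul, nsmul_eq_mul, ZMod.natCast_self, zero_mul]
  have hz : z • g = (z % (n : ℤ)) • g := by
    conv_lhs => rw [← Int.emod_add_mul_ediv z (n : ℤ)]
    rw [add_zsmul, mul_comm, mul_zsmul, hng, smul_zero, add_zero]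
  rw [← natCast_zsmul, h1, ← hz]

theorem pair_zero_equiv_iff_same_cyclic_subgroup (n : ℕ) (hn : 1 ≤ n) (p q : ZMod n) :
    Relation.EqvGen (baseRel n) (p, 0) (q, 0) ↔
      AddSubgroup.zmultiples p = AddSubgroup.zmultiples q := by
  constructor
  · intro h
    have key : ∀ x y : ZMod n × ZMod n, Relation.EqvGen (baseRel n) x y →
        AddSubgroup.closure ({x.1, x.2} : Set (ZMod n)) =
          AddSubgroup.closure ({y.1, y.2} : Set (ZMod n)) := by
      intro x y hxy
      induction hxy with
      | rel a b hab => exact closure_inv hab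
      | refl a => rfl
      | symm a b _ ih => exact ih.symm
      | trans a b c _ _ ih1 ih2 => exact ih1.trans ih2
    have := key _ _ h
    simpa [closure_pair_zero] using this
  · intro h
    have hq : q ∈ AddSubgroup.zmultiples p := h ▸ AddSubgroup.mem_zmultiples q
    have hp : -p ∈ AddSubgroup.zmultiples q :=
      AddSubgroup.neg_mem _ (h ▸ AddSubgroup.mem_zmultiples p)
    obtain ⟨m, hm⟩ := exists_nsmul_of_mem_zmultiples hn hq
    obtain ⟨m', hm'⟩ := exists_nsmul_of_mem_zmultiples hn hp
    have h1 : Relation.EqvGen (baseRel n) (p, 0) (p, q) := by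
      have := eqvgen_add_nsmul p 0 m
      simpa [hm] using this
    have h2 : Relation.EqvGen (baseRel n) (p, q) (q, -p) :=
      Relation.EqvGen.rel _ _ (Or.inr rfl)
    have h3 : Relation.EqvGen (baseRel n) (q, 0) (q, -p) := by
      have := eqvgen_add_nsmul q 0 m'
      simpa [hm'] using this
    exact Relation.EqvGen.trans _ _ _ (Relation.EqvGen.trans _ _ _ h1 h2)
      (Relation.EqvGen.symm _ _ h3)
end

section
/- Let n ≥ 1 and let ≈ be the equivalence relation on (ℤ/nℤ) × (ℤ/nℤ) generated by (g,k) ≈ (g, k+g) and (g,k) ≈ (k, −g). Then the number of equivalence classes of ≈ equals the number of subgroups of ℤ/nℤ, which equals the number of positive divisors τ(n) of n. -/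
open AddSubgroup

namespace TauAux

variable {n : ℕ}

/-- Move: add a multiple of the first coordinate to the second. -/
lemma addMul (m : ℕ) (g k : ZMod n) :
    Relation.EqvGen (baseRel n) (g, k) (g, k + m • g) := by
  induction m with
  | zero => simpa using Relation.EqvGen.refl (g, k)
  | succ m ih =>
      have h : k + (m + 1) • g = (k + m • g) + g := by
        rw [succ_nsmul]; ring
      rw [h]
      exact Relation.EqvGen.trans _ _ _ ih (Relation.EqvGen.rel _ _ (Or.inl rfl))

lemma swapMove (g k : ZMod n) :
    Relation.EqvGen (baseRel n) (g, k) (k, -g) :=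
  Relation.EqvGen.rel _ _ (Or.inr rfl)

/-- Euclid-style reduction: `(a, b)` is equivalent to `(gcd a b, 0)`. -/
lemma reduce : ∀ b : ℕ, ∀ a : ℕ,
    Relation.EqvGen (baseRel n) ((a : ZMod n), (b : ZMod n))
      ((Nat.gcd a b : ZMod n), 0) := by
  intro b
  induction b using Nat.strong_induction_on with
  | _ b ih =>
    intro a
    rcases Nat.eq_zero_or_pos b with hb | hb
    · subst hb
      simpa [Nat.gcd_zero_right] using
        Relation.EqvGen.refl ((a : ZMod n), (0 : ZMod n))
    · set r := a % b with hr
      set q := a / b with hq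
      have hrb : r < b := Nat.mod_lt _ hb
      have hab : a + (b - r) = (q + 1) * b := by
        have h1 : b * q + r = a := Nat.div_add_mod a b
        have h2 : (q + 1) * b = b * q + b := by ring
        omega
      have key : -(a : ZMod n) + (q + 1) • (b : ZMod n) = ((b - r : ℕ) : ZMod n) := by
        have : ((q + 1) • (b : ZMod n)) = (((q + 1) * b : ℕ) : ZMod n) := by
          push_cast [nsmul_eq_mul]; ring
        rw [this, ← hab]
        push_cast
        ring
      have step1 : Relation.EqvGen (baseRel n) ((a : ZMod n), (b : ZMod n))
          ((b : ZMod n), ((b - r : ℕ) : ZMod n)) := by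
        refine Relation.EqvGen.trans _ _ _ (swapMove _ _) ?_
        have := addMul (n := n) (q + 1) (b : ZMod n) (-(a : ZMod n))
        rwa [key] at this
      rcases Nat.eq_zero_or_pos r with hr0 | hr0
      · have hdvd : b ∣ a := Nat.dvd_of_mod_eq_zero hr0
        have hg : Nat.gcd a b = b := Nat.gcd_eq_right hdvd
        have hbb : (b - r : ℕ) = b := by omega
        rw [hbb] at step1
        refine Relation.EqvGen.trans _ _ _ step1 ?_
        rw [hg]
        refine Relation.EqvGen.symm _ _ ?_
        have hb2 : baseRel n ((b : ZMod n), 0) ((b : ZMod n), (b : ZMod n)) :=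
          Or.inl (by simp)
        exact Relation.EqvGen.rel _ _ hb2
      · have hlt : b - r < b := by omega
        have := ih (b - r) hlt b
        have hg : Nat.gcd b (b - r) = Nat.gcd a b := by
          have hb' : r + (b - r) = b := by omega
          calc Nat.gcd b (b - r) = (b - r).gcd (r + (b - r)) := by
                rw [hb', Nat.gcd_comm]
            _ = (b - r).gcd r := Nat.gcd_add_self_right _ _
            _ = b.gcd r := Nat.gcd_sub_self_left (Nat.le_of_lt hrb)
            _ = Nat.gcd a b := by
                rw [hr, Nat.gcd_comm b (a % b), ← Nat.gcd_rec, Nat.gcd_comm]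
        rw [hg] at this
        exact Relation.EqvGen.trans _ _ _ step1 this

/-- Canonical divisor attached to a pair. -/
def D (n : ℕ) (x : ZMod n × ZMod n) : ℕ :=
  Nat.gcd (Nat.gcd x.1.val x.2.val) n

lemma D_dvd (x : ZMod n × ZMod n) : D n x ∣ n := Nat.gcd_dvd_right _ _

/-- Full reduction to the canonical form `(D x, 0)`. -/
lemma reduce' [NeZero n] (x : ZMod n × ZMod n) :
    Relation.EqvGen (baseRel n) x ((D n x : ZMod n), 0) := by
  have hx1 : ((x.1.val : ZMod n)) = x.1 := ZMod.natCast_rightInverse x.1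
  have hx2 : ((x.2.val : ZMod n)) = x.2 := ZMod.natCast_rightInverse x.2
  have h1 : Relation.EqvGen (baseRel n) x
      ((Nat.gcd x.1.val x.2.val : ZMod n), 0) := by
    have := reduce (n := n) x.2.val x.1.val
    rwa [hx1, hx2, ← Prod.mk.eta (p := x)] at this
  refine Relation.EqvGen.trans _ _ _ h1 ?_
  have h2 := reduce (n := n) n (Nat.gcd x.1.val x.2.val)
  rwa [ZMod.natCast_self] at h2

/-- The invariant: subgroup generated by the two coordinates. -/
def f (n : ℕ) (x : ZMod n × ZMod n) : AddSubgroup (ZMod n) :=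
  AddSubgroup.closure {x.1, x.2}

lemma mem_pair_left (a b : ZMod n) : a ∈ AddSubgroup.closure {a, b} :=
  subset_closure (Set.mem_insert _ _)

lemma mem_pair_right (a b : ZMod n) : b ∈ AddSubgroup.closure {a, b} :=
  subset_closure (Set.mem_insert_of_mem _ rfl)

lemma pair_le {a b : ZMod n} {H : AddSubgroup (ZMod n)}
    (h1 : a ∈ H) (h2 : b ∈ H) : AddSubgroup.closure {a, b} ≤ H := by
  rw [closure_le]
  rintro x (rfl | rfl) <;> assumption

lemma f_resp {x y : ZMod n × ZMod n} (h : baseRel n x y) : f n x = f n y := by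
  rcases h with h | h <;> subst h <;> unfold f <;> dsimp only
  · refine le_antisymm (pair_le (mem_pair_left _ _) ?_)
      (pair_le (mem_pair_left _ _) (add_mem (mem_pair_right _ _) (mem_pair_left _ _)))
    have := add_mem (mem_pair_right x.1 (x.2 + x.1))
      (neg_mem (mem_pair_left x.1 (x.2 + x.1)))
    simpa using this
  · refine le_antisymm (pair_le ?_ (mem_pair_left _ _))
      (pair_le (mem_pair_right _ _) (neg_mem (mem_pair_left _ _)))
    have := neg_mem (mem_pair_right x.2 (-x.1))
    simpa using this

lemma f_eqvGen {x y : ZMod n × ZMod n}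
    (h : Relation.EqvGen (baseRel n) x y) : f n x = f n y := by
  induction h with
  | rel _ _ h => exact f_resp h
  | refl => rfl
  | symm _ _ _ ih => exact ih.symm
  | trans _ _ _ _ _ ih1 ih2 => exact ih1.trans ih2

lemma f_pair_zero (a : ZMod n) : f n (a, 0) = zmultiples a := by
  unfold f
  rw [zmultiples_eq_closure]
  exact le_antisymm (pair_le (subset_closure rfl) (zero_mem _))
    (closure_mono (Set.singleton_subset_iff.mpr (Set.mem_insert _ _)))

/-- zmultiples of a divisor determines the divisor. -/
lemma div_eq_of_zmultiples_eq (hn : n ≠ 0) {d e : ℕ} (hd : d ∣ n) (he : e ∣ n)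
    (h : zmultiples ((d : ZMod n)) = zmultiples ((e : ZMod n))) : d = e := by
  have hcard : addOrderOf ((d : ZMod n)) = addOrderOf ((e : ZMod n)) := by
    rw [← Nat.card_zmultiples, ← Nat.card_zmultiples, h]
  rw [ZMod.addOrderOf_coe _ hn, ZMod.addOrderOf_coe _ hn,
    Nat.gcd_eq_right hd, Nat.gcd_eq_right he] at hcard
  have h1 : n / (n / d) = d := Nat.div_div_self hd hn
  have h2 : n / (n / e) = e := Nat.div_div_self he hn
  rw [← h1, ← h2, hcard]

lemma zmultiples_gcd (a : ℕ) :
    zmultiples ((a : ZMod n)) = zmultiples ((Nat.gcd n a : ZMod n)) := by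
  apply le_antisymm
  · rw [zmultiples_le]
    obtain ⟨c, hc⟩ := Nat.gcd_dvd_right n a
    refine mem_zmultiples_iff.mpr ⟨(c : ℤ), ?_⟩
    rw [zsmul_eq_mul]
    conv_rhs => rw [hc]
    push_cast
    ring
  · rw [zmultiples_le]
    refine mem_zmultiples_iff.mpr ⟨Nat.gcdB n a, ?_⟩
    have hbezout : ((Nat.gcd n a : ℤ)) = n * Nat.gcdA n a + a * Nat.gcdB n a :=
      Nat.gcd_eq_gcd_ab n a
    have : ((Nat.gcd n a : ZMod n)) = (((n * Nat.gcdA n a + a * Nat.gcdB n a : ℤ)) : ZMod n) := by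
      rw [← hbezout]; push_cast; ring
    rw [zsmul_eq_mul, this]
    push_cast [ZMod.natCast_self]
    ring

/-- Every additive subgroup of `ZMod n` is `zmultiples` of some element. -/
lemma subgroup_eq_zmultiples (H : AddSubgroup (ZMod n)) :
    ∃ g : ZMod n, H = zmultiples g := by
  obtain ⟨⟨g, hgH⟩, hg⟩ := IsAddCyclic.exists_generator (α := H)
  refine ⟨g, le_antisymm ?_ (zmultiples_le.mpr hgH)⟩
  intro x hx
  obtain ⟨m, hm⟩ := hg ⟨x, hx⟩
  refine mem_zmultiples_iff.mpr ⟨m, ?_⟩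
  have := congrArg (Subtype.val) hm
  simpa using this

end TauAux

theorem card_classes_eq_num_subgroups_eq_tau (n : ℕ) (hn : 1 ≤ n) :
    Nat.card (Quot (baseRel n)) = Nat.card (AddSubgroup (ZMod n)) ∧
      Nat.card (AddSubgroup (ZMod n)) = n.divisors.card := by
  have hn0 : n ≠ 0 := by omega
  haveI : NeZero n := ⟨hn0⟩
  constructor
  · -- bijection `Quot (baseRel n) → AddSubgroup (ZMod n)`
    refine Nat.card_eq_of_bijective (Quot.lift (TauAux.f n)
      (fun x y h => TauAux.f_resp h)) ⟨?_, ?_⟩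
    · -- injective
      intro qx qy
      induction qx using Quot.ind with | _ x =>
      induction qy using Quot.ind with | _ y =>
      intro hfe
      simp only [Quot.lift_mk] at hfe
      have hx := TauAux.reduce' (n := n) x
      have hy := TauAux.reduce' (n := n) y
      have hfx : TauAux.f n x = zmultiples ((TauAux.D n x : ZMod n)) := by
        rw [TauAux.f_eqvGen hx, TauAux.f_pair_zero]
      have hfy : TauAux.f n y = zmultiples ((TauAux.D n y : ZMod n)) := by
        rw [TauAux.f_eqvGen hy, TauAux.f_pair_zero]
      have hDe : TauAux.D n x = TauAux.D n y :=
        TauAux.div_eq_of_zmultiples_eq hn0 (TauAux.D_dvd x) (TauAux.D_dvd y)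
          (by rw [← hfx, ← hfy, hfe])
      calc Quot.mk (baseRel n) x
          = Quot.mk (baseRel n) ((TauAux.D n x : ZMod n), 0) := Quot.eqvGen_sound hx
        _ = Quot.mk (baseRel n) ((TauAux.D n y : ZMod n), 0) := by rw [hDe]
        _ = Quot.mk (baseRel n) y := (Quot.eqvGen_sound hy).symm
    · -- surjective
      intro H
      obtain ⟨g, hg⟩ := TauAux.subgroup_eq_zmultiples H
      exact ⟨Quot.mk _ (g, 0), by simp [TauAux.f_pair_zero, hg]⟩
  · -- bijection `n.divisors → AddSubgroup (ZMod n)`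
    have : Nat.card {d : ℕ // d ∈ n.divisors} = Nat.card (AddSubgroup (ZMod n)) := by
      refine Nat.card_eq_of_bijective
        (fun d => zmultiples ((d.1 : ZMod n))) ⟨?_, ?_⟩
      · rintro ⟨d, hd⟩ ⟨e, he⟩ h
        simp only at h
        rw [Nat.mem_divisors] at hd he
        exact Subtype.ext (TauAux.div_eq_of_zmultiples_eq hn0 hd.1 he.1 h)
      · intro H
        obtain ⟨g, hg⟩ := TauAux.subgroup_eq_zmultiples H
        have hgv : ((g.val : ZMod n)) = g := ZMod.natCast_rightInverse g
        refine ⟨⟨Nat.gcd n g.val, Nat.mem_divisors.mpr ⟨Nat.gcd_dvd_left _ _, hn0⟩⟩, ?_⟩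
        simp only
        rw [← TauAux.zmultiples_gcd, hgv, hg]
    rw [← this, Nat.card_eq_finsetCard]
end

section
/- Let n ≥ 1 and let D_{2n} be the dihedral group of order 2n. Let ≈ be the equivalence relation on the set C(D_{2n}) = {(g,k) : g*k = k*g} of commuting pairs generated by (g,k) ≈ (g, k*g) and (g,k) ≈ (k, g⁻¹). Then the number of equivalence classes of ≈ equals the number of commutative (abelian) subgroups of D_{2n}. -/
open Relation Subgroup

/-- The set of commuting pairs of a group `G`. -/
def CommPairs (G : Type*) [Group G] : Type _ := {p : G × G // p.1 * p.2 = p.2 * p.1}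

/-- The base relation on commuting pairs: `(g,k) ↦ (g, k*g)` and `(g,k) ↦ (k, g⁻¹)`. -/
def genRel (G : Type*) [Group G] : CommPairs G → CommPairs G → Prop :=
  fun x y => (y.1 : G × G) = (x.1.1, x.1.2 * x.1.1) ∨ (y.1 : G × G) = (x.1.2, x.1.1⁻¹)

namespace DihAux


/-- moves on integer pairs: column operations generating SL₂(ℤ). -/
def Rz : ℤ × ℤ → ℤ × ℤ → Prop := fun p q => q = (p.1, p.2 + p.1) ∨ q = (p.2, -p.1)

lemma rz_addnat (a b : ℤ) (m : ℕ) : EqvGen Rz (a, b) (a, b + m * a) := by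
  induction m with
  | zero => simpa using EqvGen.refl (r := Rz) (a, b)
  | succ m ih =>
      refine ih.trans _ _ _ (EqvGen.rel _ _ (Or.inl ?_))
      refine Prod.ext rfl ?_
      push_cast; ring

lemma rz_add (a b t : ℤ) : EqvGen Rz (a, b) (a, b + t * a) := by
  rcases Int.eq_nat_or_neg t with ⟨m, rfl | rfl⟩
  · exact rz_addnat a b m
  · refine EqvGen.symm _ _ ?_
    have := rz_addnat a (b + -(m:ℤ) * a) m
    convert this using 2
    ring

lemma int_gcd_add_mul (x y t : ℤ) : Int.gcd x (y + t * x) = Int.gcd x y := by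
  apply Nat.dvd_antisymm
  · refine Int.natCast_dvd_natCast.mp (Int.dvd_coe_gcd (Int.gcd_dvd_left _ _) ?_)
    have h1 : (Int.gcd x (y + t*x) : ℤ) ∣ y + t * x := Int.gcd_dvd_right _ _
    have h2 : (Int.gcd x (y + t*x) : ℤ) ∣ x := Int.gcd_dvd_left _ _
    have := dvd_sub h1 (h2.mul_left t)
    simpa using this
  · refine Int.natCast_dvd_natCast.mp (Int.dvd_coe_gcd (Int.gcd_dvd_left _ _) ?_)
    exact dvd_add (Int.gcd_dvd_right _ _) ((Int.gcd_dvd_left _ _).mul_left t)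

lemma rz_swap (a b : ℤ) : EqvGen Rz (a, b) (b, -a) := EqvGen.rel _ _ (Or.inr rfl)

lemma rz_abs (x : ℤ) : EqvGen Rz (x, 0) ((x.natAbs : ℤ), 0) := by
  rcases Int.natAbs_eq x with h | h
  · rw [← h]; exact EqvGen.refl _
  · have h1 : EqvGen Rz (x, 0) ((0 : ℤ), -x) := rz_swap x 0
    have h2 : EqvGen Rz ((0:ℤ), -x) (-x, 0) := by
      have := rz_swap (0:ℤ) (-x); simpa using this
    refine (h1.trans _ _ _ h2).trans _ _ _ ?_
    rw [← neg_eq_iff_eq_neg.mpr h]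
    exact EqvGen.refl _

lemma euclid_aux : ∀ (k : ℕ) (x y : ℤ), x.natAbs ≤ k →
    EqvGen Rz (x, y) ((Int.gcd x y : ℤ), 0) := by
  intro k
  induction k with
  | zero =>
      intro x y hx
      have hx0 : x = 0 := by omega
      subst hx0
      have h1 : EqvGen Rz ((0:ℤ), y) (y, 0) := by simpa using rz_swap 0 y
      refine h1.trans _ _ _ ?_
      simpa [Int.gcd] using rz_abs y
  | succ k ih =>
      intro x y hx
      by_cases hx0 : x = 0
      · subst hx0
        have h1 : EqvGen Rz ((0:ℤ), y) (y, 0) := by simpa using rz_swap 0 y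
        refine h1.trans _ _ _ ?_
        simpa [Int.gcd] using rz_abs y
      · set m : ℤ := (x.natAbs : ℤ) with hm
        have hmpos : 0 < m := by
          simpa [hm] using Int.natAbs_pos.mpr hx0
        set r : ℤ := y % m with hr
        have hr0 : 0 ≤ r := Int.emod_nonneg y (by omega)
        have hrlt : r < m := Int.emod_lt_of_pos y hmpos
        -- r = y + t * x for some t
        have hmx : m = x ∨ m = -x := by
          rcases Int.natAbs_eq x with h | h
          · left; omega
          · right; omega
        have ht : ∃ t : ℤ, r = y + t * x := by
          have : r = y - m * (y / m) := by rw [hr, Int.emod_def]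
          rcases hmx with h | h
          · exact ⟨-(y / m), by rw [this, h]; ring⟩
          · exact ⟨y / m, by rw [this, h]; ring⟩
        obtain ⟨t, htr⟩ := ht
        have h1 : EqvGen Rz (x, y) (x, r) := htr ▸ rz_add x y t
        have h2 : EqvGen Rz (x, r) (r, -x) := rz_swap x r
        have h3 : EqvGen Rz (r, -x) ((Int.gcd r (-x) : ℤ), 0) := by
          refine ih r (-x) ?_
          omega
        have hg : Int.gcd r (-x) = Int.gcd x y := by
          rw [Int.gcd_neg, Int.gcd_comm, htr, int_gcd_add_mul]
        rw [hg] at h3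
        exact (h1.trans _ _ _ h2).trans _ _ _ h3

lemma euclid (x y : ℤ) : EqvGen Rz (x, y) ((Int.gcd x y : ℤ), 0) :=
  euclid_aux x.natAbs x y le_rfl


open DihedralGroup

variable {n : ℕ}

abbrev D (n : ℕ) := DihedralGroup n

lemma comm1 {G : Type*} [Group G] {g k : G} (h : g * k = k * g) :
    g * (k * g) = (k * g) * g := by rw [← mul_assoc, h]

lemma comm2 {G : Type*} [Group G] {g k : G} (h : g * k = k * g) :
    k * g⁻¹ = g⁻¹ * k :=
  ((show Commute g k from h).symm.inv_right : Commute k g⁻¹)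

/-- closure of a commuting pair -/
def cl {G : Type*} [Group G] (p : CommPairs G) : Subgroup G :=
  Subgroup.closure {p.1.1, p.1.2}

lemma closure_pair_mul {G : Type*} [Group G] (g k : G) :
    closure {g, k * g} = closure ({g, k} : Set G) := by
  apply le_antisymm
  · rw [closure_le]
    rintro x (rfl | rfl)
    · exact subset_closure (Set.mem_insert _ _)
    · exact mul_mem (subset_closure (Set.mem_insert_of_mem _ rfl))
        (subset_closure (Set.mem_insert _ _))
  · rw [closure_le]
    rintro x (rfl | rfl)
    · exact subset_closure (Set.mem_insert _ _)
    · have h1 : (x * g) * g⁻¹ ∈ closure ({g, x * g} : Set G) :=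
        mul_mem (subset_closure (Set.mem_insert_of_mem _ rfl))
          (inv_mem (subset_closure (Set.mem_insert _ _)))
      simpa using h1

lemma closure_pair_swap {G : Type*} [Group G] (g k : G) :
    closure {k, g⁻¹} = closure ({g, k} : Set G) := by
  apply le_antisymm
  · rw [closure_le]
    rintro x (rfl | rfl)
    · exact subset_closure (Set.mem_insert_of_mem _ rfl)
    · exact inv_mem (subset_closure (Set.mem_insert _ _))
  · rw [closure_le]
    rintro x (rfl | rfl)
    · have h1 : ((x:G)⁻¹)⁻¹ ∈ closure ({k, x⁻¹} : Set G) :=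
        inv_mem (subset_closure (Set.mem_insert_of_mem _ rfl))
      simpa using h1
    · exact subset_closure (Set.mem_insert _ _)

lemma cl_genRel {G : Type*} [Group G] {p q : CommPairs G} (h : genRel G p q) :
    cl p = cl q := by
  unfold cl
  rcases h with h | h <;> rw [h]
  · exact (closure_pair_mul _ _).symm
  · exact (closure_pair_swap _ _).symm

lemma cl_eqvGen {G : Type*} [Group G] {p q : CommPairs G} (h : EqvGen (genRel G) p q) :
    cl p = cl q := by
  induction h with
  | rel a b hab => exact cl_genRel hab
  | refl => rfl
  | symm a b _ ih => exact ih.symm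
  | trans a b c _ _ h1 h2 => exact h1.trans h2

lemma cl_abelian {G : Type*} [Group G] (p : CommPairs G) :
    ∀ a ∈ cl p, ∀ b ∈ cl p, a * b = b * a := by
  intro a ha b hb
  refine closure_induction₂ (p := fun x y _ _ => Commute x y) ?_ ?_ ?_ ?_ ?_ ?_ ?_ ha hb
  · rintro x y (rfl | rfl) (rfl | rfl)
    · exact Commute.refl _
    · exact p.2
    · exact (show Commute p.1.1 p.1.2 from p.2).symm
    · exact Commute.refl _
  · exact fun x _ => Commute.one_left x
  · exact fun x _ => Commute.one_right x
  · exact fun x y z _ _ _ h1 h2 => h1.mul_left h2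
  · exact fun y z x _ _ _ h1 h2 => h1.mul_right h2
  · exact fun x y _ _ h => h.inv_left
  · exact fun x y _ _ h => h.inv_right

section Dih
variable {n : ℕ}
open DihedralGroup

/-- embedding of integer pairs as rotation pairs -/
def emb (n : ℕ) (p : ℤ × ℤ) : CommPairs (D n) :=
  ⟨(r (p.1 : ZMod n), r (p.2 : ZMod n)), by simp [add_comm]⟩

lemma emb_rel {p q : ℤ × ℤ} (h : Rz p q) : genRel (D n) (emb n p) (emb n q) := by
  rcases h with h | h <;> rw [h]
  · left
    simp only [emb, r_mul_r]
    push_cast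
    rfl
  · right
    simp only [emb]
    have : (r ((p.1 : ℤ) : ZMod n))⁻¹ = r (-((p.1 : ℤ) : ZMod n)) := rfl
    rw [this]
    push_cast
    rfl

lemma emb_eqvGen {p q : ℤ × ℤ} (h : EqvGen Rz p q) :
    EqvGen (genRel (D n)) (emb n p) (emb n q) := by
  induction h with
  | rel a b hab => exact EqvGen.rel _ _ (emb_rel hab)
  | refl a => exact EqvGen.refl _
  | symm a b _ ih => exact EqvGen.symm _ _ ih
  | trans a b c _ _ h1 h2 => exact EqvGen.trans _ _ _ h1 h2

lemma r_pow (i : ZMod n) (k : ℕ) : (r i) ^ k = r ((k : ZMod n) * i) := by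
  induction k with
  | zero => simp [one_def, -r_zero]
  | succ k ih => rw [pow_succ, ih, r_mul_r]; push_cast; ring_nf

lemma r_zpow (i : ZMod n) (k : ℤ) : (r i) ^ k = r ((k : ZMod n) * i) := by
  rcases Int.eq_nat_or_neg k with ⟨m, rfl | rfl⟩
  · rw [zpow_natCast, r_pow]; push_cast; ring_nf
  · rw [zpow_neg, zpow_natCast, r_pow]
    have : (r (((m : ℕ) : ZMod n) * i))⁻¹ = r (-(((m : ℕ) : ZMod n) * i)) := rfl
    rw [this]
    push_cast
    ring_nf

lemma closure_pair_one {G : Type*} [Group G] (x : G) :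
    closure {x, (1 : G)} = closure ({x} : Set G) := by
  rw [show ({x, (1:G)} : Set G) = {x} ∪ {1} from rfl, Subgroup.closure_union,
    Subgroup.closure_singleton_one, sup_bot_eq]

lemma rot_only {i j : ZMod n} {x : D n} (hx : x ∈ closure ({r i, r j} : Set (D n))) :
    ∃ m, x = r m := by
  induction hx using closure_induction with
  | mem x hx => rcases hx with rfl | rfl
                · exact ⟨i, rfl⟩
                · exact ⟨j, rfl⟩
  | one => exact ⟨0, rfl⟩
  | mul x y _ _ hx hy =>
      obtain ⟨a, rfl⟩ := hx; obtain ⟨b, rfl⟩ := hy; exact ⟨a + b, rfl⟩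
  | inv x _ hx => obtain ⟨a, rfl⟩ := hx; exact ⟨-a, rfl⟩

lemma inv_r (i : ZMod n) : (r i)⁻¹ = r (-i) := rfl
lemma inv_sr (i : ZMod n) : (sr i)⁻¹ = sr i := rfl

lemma closure_sr_one (c : ZMod n) {x : D n} (hx : x ∈ closure ({sr c, (1 : D n)} : Set (D n))) :
    x = 1 ∨ x = sr c := by
  induction hx using closure_induction with
  | mem x hx => rcases hx with rfl | rfl
                · exact Or.inr rfl
                · exact Or.inl rfl
  | one => exact Or.inl rfl
  | mul x y _ _ hx hy =>
      rcases hx with rfl | rfl <;> rcases hy with rfl | rfl <;>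
        simp [one_def, -r_zero]
  | inv x _ hx => rcases hx with rfl | rfl <;> simp [one_def, inv_r, inv_sr, -r_zero]

lemma closure_klein {a c : ZMod n} (ha : a + a = 0) {x : D n}
    (hx : x ∈ closure ({r a, sr c} : Set (D n))) :
    x = 1 ∨ x = r a ∨ x = sr c ∨ x = sr (c + a) := by
  have hna : -a = a := neg_eq_of_add_eq_zero_left ha
  induction hx using closure_induction with
  | mem x hx => rcases hx with rfl | rfl
                · exact Or.inr (Or.inl rfl)
                · exact Or.inr (Or.inr (Or.inl rfl))
  | one => exact Or.inl rfl
  | mul x y _ _ hx hy =>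
      rcases hx with rfl | rfl | rfl | rfl <;> rcases hy with rfl | rfl | rfl | rfl <;>
      · simp only [one_def, r_mul_r, r_mul_sr, sr_mul_r, sr_mul_sr, sub_eq_add_neg,
          neg_add_rev, hna, r.injEq, sr.injEq]
        try ring_nf
        simp [ha, hna, add_comm, add_left_comm, two_mul, mul_two]
  | inv x _ hx =>
      rcases hx with rfl | rfl | rfl | rfl <;>
      · simp only [one_def, inv_r, inv_sr, hna, r.injEq, sr.injEq]
        simp [ha, hna, add_comm, add_left_comm, two_mul, mul_two]

end Dih

section Main
variable {n : ℕ}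
open DihedralGroup

lemma two_torsion_unique [NeZero n] {x y : ZMod n} (hx : x + x = 0) (hy : y + y = 0)
    (hx0 : x ≠ 0) (hy0 : y ≠ 0) : x = y := by
  have key : ∀ z : ZMod n, z + z = 0 → z ≠ 0 → z.val + z.val = n := by
    intro z hz hz0
    have h1 : ((z.val + z.val : ℕ) : ZMod n) = 0 := by
      push_cast [ZMod.natCast_val, ZMod.cast_id]
      rw [hz]
    have h2 : n ∣ z.val + z.val := (ZMod.natCast_eq_zero_iff _ _).mp h1
    have h3 : z.val < n := ZMod.val_lt z
    have h4 : z.val ≠ 0 := fun h => hz0 ((ZMod.val_eq_zero z).mp h)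
    exact Nat.eq_of_dvd_of_lt_two_mul (by omega) h2 (by omega)
  have hxy : x.val = y.val := by
    have := key x hx hx0; have := key y hy hy0; omega
  exact ZMod.val_injective n hxy

lemma typeA_dvd [NeZero n] {a b : ℕ} (han : a ∣ n)
    (hmem : (r (b : ZMod n) : D n) ∈ closure ({r (a : ZMod n), (1 : D n)} : Set (D n))) :
    a ∣ b := by
  rw [closure_pair_one, ← Subgroup.zpowers_eq_closure] at hmem
  obtain ⟨k, hk0⟩ := hmem
  have hk : (r (a : ZMod n) : D n) ^ k = r (b : ZMod n) := hk0
  rw [r_zpow] at hk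
  have hzk : (((k * a : ℤ)) : ZMod n) = ((b : ℤ) : ZMod n) := by
    have : ((k : ZMod n) * (a : ZMod n)) = (b : ZMod n) := by
      have := hk
      simp only [r.injEq] at this
      exact this
    push_cast
    push_cast at this
    exact this
  have hmod : (n : ℤ) ∣ (b : ℤ) - k * a := (ZMod.intCast_eq_intCast_iff _ _ _).mp hzk |>.dvd
  have hadvd : (a : ℤ) ∣ (b : ℤ) := by
    have h1 : (a : ℤ) ∣ (n : ℤ) := Int.natCast_dvd_natCast.mpr han
    have h2 : (a : ℤ) ∣ (b : ℤ) - k * a := h1.trans hmod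
    have h3 : (a : ℤ) ∣ k * a := Dvd.intro_left k rfl
    have := dvd_add h2 h3
    simpa using this
  exact Int.natCast_dvd_natCast.mp hadvd

lemma typeA_inj [NeZero n] {d d' : ℕ} (hd : d ∣ n) (hd' : d' ∣ n)
    (h : closure ({r (d : ZMod n), (1 : D n)} : Set (D n)) =
      closure ({r (d' : ZMod n), (1 : D n)} : Set (D n))) : d = d' := by
  have h1 : (r (d' : ZMod n) : D n) ∈ closure ({r (d : ZMod n), (1 : D n)} : Set (D n)) := by
    rw [h]; exact subset_closure (Set.mem_insert _ _)
  have h2 : (r (d : ZMod n) : D n) ∈ closure ({r (d' : ZMod n), (1 : D n)} : Set (D n)) := by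
    rw [← h]; exact subset_closure (Set.mem_insert _ _)
  exact Nat.dvd_antisymm (typeA_dvd hd h1) (typeA_dvd hd' h2)

/-- canonical rotation pair -/
def cAr (n : ℕ) (d : ℕ) : CommPairs (D n) :=
  ⟨(r (d : ZMod n), 1), by rw [mul_one, one_mul]⟩

/-- canonical order-2 pair -/
def cB (n : ℕ) (c : ZMod n) : CommPairs (D n) :=
  ⟨(sr c, 1), by rw [mul_one, one_mul]⟩

/-- canonical Klein pair -/
def cK (n : ℕ) (a c : ZMod n) (ha : a + a = 0) : CommPairs (D n) :=
  ⟨(r a, sr c), by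
    show sr (c - a) = sr (c + a)
    rw [sub_eq_add_neg, neg_eq_of_add_eq_zero_left ha]⟩

lemma cl_cAr (d : ℕ) : cl (cAr n d) = closure ({r (d : ZMod n), (1 : D n)} : Set (D n)) := rfl
lemma cl_cB (c : ZMod n) : cl (cB n c) = closure ({sr c, (1 : D n)} : Set (D n)) := rfl
lemma cl_cK (a c : ZMod n) (ha : a + a = 0) :
    cl (cK n a c ha) = closure ({r a, sr c} : Set (D n)) := rfl

lemma reduce_mixed [NeZero n] (i c : ZMod n) (h2i : i + i = 0)
    (hc : (r i : D n) * sr c = sr c * r i) :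
    (∃ c', EqvGen (genRel (D n)) ⟨(r i, sr c), hc⟩ (cB n c')) ∨
    (∃ a c', ∃ _ : a ≠ 0, ∃ h2 : a + a = 0,
      EqvGen (genRel (D n)) ⟨(r i, sr c), hc⟩ (cK n a c' h2)) := by
  by_cases hi : i = 0
  · left
    refine ⟨c, EqvGen.rel _ _ (Or.inr ?_)⟩
    show ((sr c, 1) : D n × D n) = (sr c, (r i)⁻¹)
    refine Prod.ext rfl ?_
    rw [hi, inv_r, neg_zero, ← one_def]
  · right
    refine ⟨i, c, hi, h2i, ?_⟩
    have : (⟨(r i, sr c), hc⟩ : CommPairs (D n)) = cK n i c h2i := Subtype.ext rfl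
    rw [this]
    exact EqvGen.refl _

lemma reduce [NeZero n] (p : CommPairs (D n)) :
    (∃ d : ℕ, d ∣ n ∧ EqvGen (genRel (D n)) p (cAr n d)) ∨
    (∃ c, EqvGen (genRel (D n)) p (cB n c)) ∨
    (∃ a c, ∃ _ : a ≠ 0, ∃ h2 : a + a = 0, EqvGen (genRel (D n)) p (cK n a c h2)) := by
  obtain ⟨⟨g, k⟩, hcomm⟩ := p
  rcases g with i | a <;> rcases k with j | b
  · -- both rotations
    left
    have e0 : (⟨(r i, r j), hcomm⟩ : CommPairs (D n)) = emb n ((i.val : ℤ), (j.val : ℤ)) := by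
      refine Subtype.ext (Prod.ext ?_ ?_) <;>
        · show _ = r _
          congr 1
          push_cast [ZMod.natCast_val, ZMod.cast_id]
          rfl
    set g1 : ℕ := Int.gcd (i.val : ℤ) (j.val : ℤ) with hg1
    set d : ℕ := Nat.gcd g1 n with hdd
    refine ⟨d, Nat.gcd_dvd_right _ _, ?_⟩
    have h1 : EqvGen (genRel (D n)) (emb n ((i.val : ℤ), (j.val : ℤ))) (emb n ((g1 : ℤ), 0)) :=
      emb_eqvGen (euclid _ _)
    have heq : emb n ((g1 : ℤ), 0) = emb n ((g1 : ℤ), (n : ℤ)) := by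
      refine Subtype.ext (Prod.ext rfl ?_)
      show r _ = r _
      congr 1
      push_cast
      simp [ZMod.natCast_self]
    have h2 : EqvGen (genRel (D n)) (emb n ((g1 : ℤ), (n : ℤ))) (emb n ((d : ℤ), 0)) := by
      have := emb_eqvGen (n := n) (euclid (g1 : ℤ) (n : ℤ))
      rwa [show Int.gcd (g1 : ℤ) (n : ℤ) = d from by rw [Int.gcd_natCast_natCast]] at this
    have e1 : emb n ((d : ℤ), 0) = cAr n d := by
      refine Subtype.ext (Prod.ext ?_ ?_)
      · show r _ = r _; congr 1; push_cast; ring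
      · show r _ = (1 : D n); rw [show (((0 : ℤ) : ZMod n)) = 0 from by push_cast; ring, ← one_def]
    rw [e0, ← e1]
    exact (h1.trans _ _ _ (heq ▸ h2))
  · -- r i, sr b
    have h2i : i + i = 0 := by
      have h := hcomm
      simp only [r_mul_sr, sr_mul_r, sr.injEq] at h
      linear_combination -h
    exact Or.inr (reduce_mixed i b h2i hcomm)
  · -- sr a, r j
    have h2j : j + j = 0 := by
      have h := hcomm
      simp only [r_mul_sr, sr_mul_r, sr.injEq] at h
      linear_combination h
    have hc2 : (r j : D n) * sr a = sr a * r j := by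
      show sr (a - j) = sr (a + j)
      rw [sub_eq_add_neg, neg_eq_of_add_eq_zero_left h2j]
    have step : genRel (D n) ⟨(sr a, r j), hcomm⟩ ⟨(r j, sr a), hc2⟩ := by
      right
      show ((r j, sr a) : D n × D n) = (r j, (sr a)⁻¹)
      rw [inv_sr]
    rcases reduce_mixed j a h2j hc2 with ⟨c', h⟩ | ⟨a', c', ha', h2', h⟩
    · exact Or.inr (Or.inl ⟨c', (EqvGen.rel _ _ step).trans _ _ _ h⟩)
    · exact Or.inr (Or.inr ⟨a', c', ha', h2', (EqvGen.rel _ _ step).trans _ _ _ h⟩)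
  · -- sr a, sr b
    have hba : b - a = a - b := by
      have h := hcomm
      simp only [sr_mul_sr, r.injEq] at h
      exact h
    by_cases hab : a = b
    · subst hab
      refine Or.inr (Or.inl ⟨a, EqvGen.rel _ _ (Or.inl ?_)⟩)
      show ((sr a, 1) : D n × D n) = (sr a, sr a * sr a)
      refine Prod.ext rfl ?_
      rw [sr_mul_sr, sub_self, ← one_def]
    · have h2 : (a - b) + (a - b) = 0 := by linear_combination -hba
      have ha0 : a - b ≠ 0 := sub_ne_zero.mpr hab
      have hc1 : (sr a : D n) * r (a - b) = r (a - b) * sr a := by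
        show sr (a + (a - b)) = sr (a - (a - b))
        congr 1
        linear_combination h2
      have step1 : genRel (D n) ⟨(sr a, sr b), hcomm⟩ ⟨(sr a, r (a - b)), hc1⟩ := by
        left
        show ((sr a, r (a - b)) : D n × D n) = (sr a, sr b * sr a)
        refine Prod.ext rfl ?_
        rw [sr_mul_sr]
      have step2 : genRel (D n) ⟨(sr a, r (a - b)), hc1⟩ (cK n (a - b) a h2) := by
        right
        show ((r (a - b), sr a) : D n × D n) = (r (a - b), (sr a)⁻¹)
        rw [inv_sr]
      exact Or.inr (Or.inr ⟨a - b, a, ha0, h2,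
        (EqvGen.rel _ _ step1).trans _ _ _ (EqvGen.rel _ _ step2)⟩)

end Main

section Final
variable {n : ℕ}
open DihedralGroup

lemma no_sr_typeA [NeZero n] {d : ℕ} {c : ZMod n}
    (h : (sr c : D n) ∈ closure ({r (d : ZMod n), (1 : D n)} : Set (D n))) : False := by
  rw [show ({r (d : ZMod n), (1 : D n)} : Set (D n)) = {r (d : ZMod n), r 0} from by
    rw [one_def]] at h
  obtain ⟨m, hm⟩ := rot_only h
  exact absurd hm (by simp)

lemma cl_inj [NeZero n] (p q : CommPairs (D n)) (h : cl p = cl q) :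
    EqvGen (genRel (D n)) p q := by
  rcases reduce p with ⟨d, hd, hp⟩ | ⟨c, hp⟩ | ⟨a, c, ha, h2, hp⟩ <;>
    rcases reduce q with ⟨d', hd', hq⟩ | ⟨c', hq⟩ | ⟨a', c', ha', h2', hq⟩ <;>
    [ (have hcl := (cl_eqvGen hp).symm.trans (h.trans (cl_eqvGen hq)));
      (have hcl := (cl_eqvGen hp).symm.trans (h.trans (cl_eqvGen hq)));
      (have hcl := (cl_eqvGen hp).symm.trans (h.trans (cl_eqvGen hq)));
      (have hcl := (cl_eqvGen hp).symm.trans (h.trans (cl_eqvGen hq)));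
      (have hcl := (cl_eqvGen hp).symm.trans (h.trans (cl_eqvGen hq)));
      (have hcl := (cl_eqvGen hp).symm.trans (h.trans (cl_eqvGen hq)));
      (have hcl := (cl_eqvGen hp).symm.trans (h.trans (cl_eqvGen hq)));
      (have hcl := (cl_eqvGen hp).symm.trans (h.trans (cl_eqvGen hq)));
      (have hcl := (cl_eqvGen hp).symm.trans (h.trans (cl_eqvGen hq)))]
  · -- A A
    have : d = d' := typeA_inj hd hd' hcl
    subst this
    exact hp.trans _ _ _ (EqvGen.symm _ _ hq)
  · -- A B
    exfalso
    refine no_sr_typeA (d := d) (c := c') ?_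
    rw [cl_cAr, cl_cB] at hcl
    rw [hcl]
    exact subset_closure (Set.mem_insert _ _)
  · -- A K
    exfalso
    refine no_sr_typeA (d := d) (c := c') ?_
    rw [cl_cAr, cl_cK] at hcl
    rw [hcl]
    exact subset_closure (Set.mem_insert_of_mem _ rfl)
  · -- B A
    exfalso
    refine no_sr_typeA (d := d') (c := c) ?_
    rw [cl_cB, cl_cAr] at hcl
    rw [← hcl]
    exact subset_closure (Set.mem_insert _ _)
  · -- B B
    have hmem : (sr c' : D n) ∈ closure ({sr c, (1 : D n)} : Set (D n)) := by
      rw [cl_cB, cl_cB] at hcl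
      rw [hcl]
      exact subset_closure (Set.mem_insert _ _)
    rcases closure_sr_one c hmem with h1 | h1
    · exact absurd h1 (by simp [one_def, -r_zero])
    · have : c' = c := by simpa using h1
      subst this
      exact hp.trans _ _ _ (EqvGen.symm _ _ hq)
  · -- B K
    exfalso
    have hmem : (r a' : D n) ∈ closure ({sr c, (1 : D n)} : Set (D n)) := by
      rw [cl_cB, cl_cK] at hcl
      rw [hcl]
      exact subset_closure (Set.mem_insert _ _)
    rcases closure_sr_one c hmem with h1 | h1
    · exact ha' (by simpa [one_def, -r_zero] using h1)
    · exact absurd h1 (by simp)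
  · -- K A
    exfalso
    refine no_sr_typeA (d := d') (c := c) ?_
    rw [cl_cK, cl_cAr] at hcl
    rw [← hcl]
    exact subset_closure (Set.mem_insert_of_mem _ rfl)
  · -- K B
    exfalso
    have hmem : (r a : D n) ∈ closure ({sr c', (1 : D n)} : Set (D n)) := by
      rw [cl_cK, cl_cB] at hcl
      rw [← hcl]
      exact subset_closure (Set.mem_insert _ _)
    rcases closure_sr_one c' hmem with h1 | h1
    · exact ha (by simpa [one_def, -r_zero] using h1)
    · exact absurd h1 (by simp)
  · -- K K
    have haa : a = a' := two_torsion_unique h2 h2' ha ha'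
    subst haa
    have hmem : (sr c' : D n) ∈ closure ({r a, sr c} : Set (D n)) := by
      rw [cl_cK, cl_cK] at hcl
      rw [hcl]
      exact subset_closure (Set.mem_insert_of_mem _ rfl)
    rcases closure_klein h2 hmem with h1 | h1 | h1 | h1
    · exact absurd h1 (by simp [one_def, -r_zero])
    · exact absurd h1 (by simp)
    · have : c' = c := by simpa using h1
      subst this
      exact hp.trans _ _ _ (EqvGen.symm _ _ hq)
    · have hcc : c' = c + a := by simpa using h1
      subst hcc
      have step : genRel (D n) (cK n a c h2) (cK n a (c + a) h2) := by
        left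
        show ((r a, sr (c + a)) : D n × D n) = (r a, sr c * r a)
        refine Prod.ext rfl ?_
        rw [sr_mul_r]
      exact hp.trans _ _ _ ((EqvGen.rel _ _ step).trans _ _ _ (EqvGen.symm _ _ hq))

lemma cl_surj [NeZero n] (H : Subgroup (D n)) (hH : ∀ a ∈ H, ∀ b ∈ H, a * b = b * a) :
    ∃ p : CommPairs (D n), cl p = H := by
  by_cases href : ∃ c, (sr c : D n) ∈ H
  · obtain ⟨c, hc⟩ := href
    have habtors : ∀ i : ZMod n, (r i : D n) ∈ H → i + i = 0 := by
      intro i hi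
      have hcm := hH _ hi _ hc
      simp only [r_mul_sr, sr_mul_r, sr.injEq] at hcm
      linear_combination -hcm
    have hrefl : ∀ b : ZMod n, (sr b : D n) ∈ H → (r (c - b) : D n) ∈ H := by
      intro b hb
      have := mul_mem hb hc
      rwa [sr_mul_sr] at this
    by_cases hex : ∃ a : ZMod n, a ≠ 0 ∧ (r a : D n) ∈ H
    · obtain ⟨a, ha0, haH⟩ := hex
      have h2 := habtors a haH
      refine ⟨cK n a c h2, le_antisymm ?_ ?_⟩
      · rw [cl_cK, closure_le]
        rintro x (rfl | rfl)
        · exact haH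
        · exact hc
      · intro x hx
        rw [cl_cK]
        rcases x with i | b
        · have h2i := habtors i hx
          by_cases hi0 : i = 0
          · subst hi0
            rw [← one_def]
            exact one_mem _
          · have : i = a := two_torsion_unique h2i h2 hi0 ha0
            subst this
            exact subset_closure (Set.mem_insert _ _)
        · have hrot := hrefl b hx
          by_cases hcb : c - b = 0
          · have : c = b := sub_eq_zero.mp hcb
            subst this
            exact subset_closure (Set.mem_insert_of_mem _ rfl)
          · have hcba : c - b = a := two_torsion_unique (habtors _ hrot) h2 hcb ha0
            have hb : b = c + a := by linear_combination -hcba - h2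
            subst hb
            have : (sr (c + a) : D n) = sr c * r a := by rw [sr_mul_r]
            rw [this]
            exact mul_mem (subset_closure (Set.mem_insert_of_mem _ rfl))
              (subset_closure (Set.mem_insert _ _))
    · push_neg at hex
      refine ⟨cB n c, le_antisymm ?_ ?_⟩
      · rw [cl_cB, closure_le]
        rintro x (rfl | rfl)
        · exact hc
        · exact one_mem _
      · intro x hx
        rw [cl_cB]
        rcases x with i | b
        · by_cases hi0 : i = 0
          · subst hi0; rw [← one_def]; exact one_mem _
          · exact absurd hx (hex i hi0)
        · have hrot := hrefl b hx
          by_cases hcb : c - b = 0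
          · have : c = b := sub_eq_zero.mp hcb
            subst this
            exact subset_closure (Set.mem_insert _ _)
          · exact absurd hrot (hex _ hcb)
  · push_neg at href
    have Smem : ∀ i j : ZMod n, (r i : D n) ∈ H → (r j : D n) ∈ H → (r (i + j) : D n) ∈ H := by
      intro i j hi hj
      have := mul_mem hi hj
      rwa [r_mul_r] at this
    set S : AddSubgroup (ZMod n) :=
      { carrier := {i | (r i : D n) ∈ H}
        add_mem' := fun {i j} hi hj => Smem i j hi hj
        zero_mem' := by show (r 0 : D n) ∈ H; rw [← one_def]; exact one_mem _
        neg_mem' := by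
          intro i hi
          show (r (-i) : D n) ∈ H
          rw [← inv_r]
          exact inv_mem hi } with hS
    obtain ⟨z, hz⟩ := Int.subgroup_cyclic (S.comap (Int.castAddHom (ZMod n)))
    have hzS : ∀ w : ℤ, (w : ZMod n) ∈ S ↔ w ∈ AddSubgroup.closure ({z} : Set ℤ) := by
      intro w
      rw [← hz]
      rfl
    refine ⟨⟨(r ((z : ℤ) : ZMod n), 1), by rw [mul_one, one_mul]⟩, le_antisymm ?_ ?_⟩
    · rw [show cl (⟨(r ((z : ℤ) : ZMod n), 1), by rw [mul_one, one_mul]⟩ : CommPairs (D n)) =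
        closure ({r ((z : ℤ) : ZMod n), (1 : D n)} : Set (D n)) from rfl, closure_le]
      rintro x (rfl | rfl)
      · exact (hzS z).mpr (AddSubgroup.subset_closure rfl)
      · exact one_mem _
    · intro x hx
      rcases x with i | b
      · have hiS : ((i.val : ℤ) : ZMod n) ∈ S := by
          rw [show (((i.val : ℤ)) : ZMod n) = i from by push_cast [ZMod.natCast_val, ZMod.cast_id]; rfl]
          exact hx
        obtain ⟨k, hk⟩ := AddSubgroup.mem_closure_singleton.mp ((hzS _).mp hiS)
        have hri : (r i : D n) = (r ((z : ℤ) : ZMod n)) ^ k := by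
          rw [r_zpow]
          congr 1
          have : ((k • z : ℤ) : ZMod n) = ((i.val : ℤ) : ZMod n) := by rw [hk]
          rw [show (((i.val : ℤ)) : ZMod n) = i from by
            push_cast [ZMod.natCast_val, ZMod.cast_id]; rfl] at this
          rw [← this, smul_eq_mul]
          push_cast
          ring
        rw [hri]
        exact zpow_mem (subset_closure (Set.mem_insert _ _)) k
      · exact absurd hx (href b)

end Final

end DihAux

theorem dihedral_r1_eq_num_abelian_subgroups (n : ℕ) (hn : 1 ≤ n) :
    Nat.card (Quot (genRel (DihedralGroup n))) =
      Nat.card {H : Subgroup (DihedralGroup n) // ∀ a ∈ H, ∀ b ∈ H, a * b = b * a} := by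
  haveI : NeZero n := ⟨by omega⟩
  refine Nat.card_eq_of_bijective
    (Quot.lift (fun p => (⟨DihAux.cl p, DihAux.cl_abelian p⟩ :
        {H : Subgroup (DihedralGroup n) // ∀ a ∈ H, ∀ b ∈ H, a * b = b * a}))
      (fun a b hab => Subtype.ext (DihAux.cl_genRel hab))) ⟨?_, ?_⟩
  · intro x y
    induction x using Quot.ind with | _ p => ?_
    induction y using Quot.ind with | _ q => ?_
    intro hxy
    have hcl : DihAux.cl p = DihAux.cl q := congrArg Subtype.val hxy
    exact Quot.eqvGen_sound (DihAux.cl_inj p q hcl)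
  · rintro ⟨H, hH⟩
    obtain ⟨p, hp⟩ := DihAux.cl_surj H hH
    exact ⟨Quot.mk _ p, Subtype.ext hp⟩
end

section
/- Let n ≥ 1 and let Dic_n be the dicyclic group of order 4n. Let ≈ be the equivalence relation on the set C(Dic_n) = {(g,k) : g*k = k*g} of commuting pairs generated by (g,k) ≈ (g, k*g) and (g,k) ≈ (k, g⁻¹). Then the number of equivalence classes of ≈ equals the number of commutative (abelian) subgroups of Dic_n. -/
namespace R1Aux
open Subgroup
variable {G : Type*} [Group G]

lemma natAbs_emod_lt (a b : ℤ) (h : b ≠ 0) : (a % b).natAbs < b.natAbs := by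
  have h1 := Int.emod_nonneg a h
  have h2 := Int.emod_lt a h
  omega

lemma gcd_rec' (a b : ℤ) : Int.gcd b (a % b) = Int.gcd a b := by
  have hd : a = b * (a / b) + a % b := by rw [Int.emod_def]; ring
  apply Nat.dvd_antisymm
  · rw [← Int.natCast_dvd_natCast]
    have h2 : ((Int.gcd b (a % b) : ℤ)) ∣ b * (a / b) + a % b :=
      dvd_add ((Int.gcd_dvd_left _ _).mul_right _) (Int.gcd_dvd_right _ _)
    rw [← hd] at h2
    exact Int.dvd_coe_gcd h2 (Int.gcd_dvd_left _ _)
  · rw [← Int.natCast_dvd_natCast]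
    refine Int.dvd_coe_gcd (Int.gcd_dvd_right _ _) ?_
    rw [Int.emod_def]
    exact dvd_sub (Int.gcd_dvd_left _ _) ((Int.gcd_dvd_right _ _).mul_right _)

def mkP (g k : G) (h : g * k = k * g) : Quot (genRel G) := Quot.mk _ ⟨(g, k), h⟩

lemma mkP_congr {g k g' k' : G} (h : g * k = k * g) (h' : g' * k' = k' * g')
    (hg : g = g') (hk : k = k') : mkP g k h = mkP g' k' h' := by subst hg; subst hk; rfl

lemma mk_eq_mkP (p : CommPairs G) : Quot.mk (genRel G) p = mkP p.1.1 p.1.2 p.2 := rfl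

lemma mkP_mul (g k : G) (h : g * k = k * g) :
    mkP g k h = mkP g (k * g) (by rw [← mul_assoc, h, mul_assoc]) := Quot.sound (Or.inl rfl)

lemma mkP_swap (g k : G) (h : g * k = k * g) :
    mkP g k h = mkP k g⁻¹ (by
      have hc : Commute g k := h
      exact hc.symm.inv_right.eq) := Quot.sound (Or.inr rfl)

lemma commz (x : G) (a b : ℤ) : x ^ a * x ^ b = x ^ b * x ^ a := by
  rw [← zpow_add, ← zpow_add, add_comm]

def mkz (x : G) (a b : ℤ) : Quot (genRel G) := mkP (x ^ a) (x ^ b) (commz x a b)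

lemma mkz_add (x : G) (a b : ℤ) (q : ℤ) : mkz x a b = mkz x a (b + a * q) := by
  induction q using Int.induction_on with
  | zero => simp
  | succ i ih =>
    rw [ih]
    exact (mkP_mul _ _ _).trans
      (mkP_congr _ (commz x a (b + a * (i + 1))) rfl (by rw [← zpow_add]; ring_nf))
  | pred i ih =>
    rw [ih]
    exact ((mkP_mul _ _ (commz x a (b + a * (-i - 1)))).trans
      (mkP_congr _ (commz x a (b + a * (-i))) rfl (by rw [← zpow_add]; ring_nf))).symm

lemma mkz_swap (x : G) (a b : ℤ) : mkz x a b = mkz x b (-a) :=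
  (mkP_swap _ _ _).trans (mkP_congr _ (commz x b (-a)) rfl (zpow_neg x a).symm)

lemma zpowers_gcd (x : G) (a b : ℤ) :
    Subgroup.zpowers (x ^ (Int.gcd a b : ℤ)) = Subgroup.closure {x ^ a, x ^ b} := by
  have hma : x ^ a ∈ Subgroup.closure {x ^ a, x ^ b} :=
    Subgroup.subset_closure (by left; rfl)
  have hmb : x ^ b ∈ Subgroup.closure {x ^ a, x ^ b} :=
    Subgroup.subset_closure (by right; rfl)
  apply le_antisymm
  · rw [Subgroup.zpowers_le]
    have h1 : x ^ (Int.gcd a b : ℤ) =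
        (x ^ a) ^ Int.gcdA a b * (x ^ b) ^ Int.gcdB a b := by
      rw [← zpow_mul, ← zpow_mul, ← zpow_add, ← Int.gcd_eq_gcd_ab]
    rw [h1]
    exact mul_mem (zpow_mem hma _) (zpow_mem hmb _)
  · rw [Subgroup.closure_le]
    rintro y (rfl | rfl)
    · exact ⟨a / (Int.gcd a b : ℤ), by
        show (x ^ (Int.gcd a b : ℤ)) ^ (a / (Int.gcd a b : ℤ)) = x ^ a
        rw [← zpow_mul, Int.mul_ediv_cancel' (Int.gcd_dvd_left _ _)]⟩
    · exact ⟨b / (Int.gcd a b : ℤ), by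
        show (x ^ (Int.gcd a b : ℤ)) ^ (b / (Int.gcd a b : ℤ)) = x ^ b
        rw [← zpow_mul, Int.mul_ediv_cancel' (Int.gcd_dvd_right _ _)]⟩

lemma mkz_gcd (x : G) (a b : ℤ) : mkz x a b = mkz x (Int.gcd a b : ℤ) 0 := by
  by_cases hb : b = 0
  · subst hb
    rcases Int.natAbs_eq a with ha | ha
    · exact mkP_congr _ _ (by rw [Int.gcd_zero_right, ← ha]) rfl
    · calc mkz x a 0 = mkz x 0 (-a) := mkz_swap x a 0
        _ = mkz x (-a) 0 := by rw [mkz_swap x 0 (-a)]; exact mkP_congr _ _ rfl (by norm_num)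
        _ = mkz x (Int.gcd a 0 : ℤ) 0 :=
            mkP_congr _ _ (by rw [Int.gcd_zero_right]; congr 1; omega) rfl
  · calc mkz x a b = mkz x b (-a) := mkz_swap x a b
      _ = mkz x b (-a + b * (a / b)) := mkz_add x b (-a) (a / b)
      _ = mkz x b (-(a % b)) := mkP_congr _ _ rfl (by rw [Int.emod_def]; ring_nf)
      _ = mkz x (Int.gcd b (-(a % b)) : ℤ) 0 := mkz_gcd x b (-(a % b))
      _ = mkz x (Int.gcd a b : ℤ) 0 := by
          rw [show Int.gcd b (-(a % b)) = Int.gcd b (a % b) by simp [Int.gcd], gcd_rec']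
  termination_by b.natAbs
  decreasing_by simpa using natAbs_emod_lt a b hb

lemma one_comm (y : G) : y * 1 = 1 * y := by rw [mul_one, one_mul]

lemma mk_one_eq (u v : G) (hu : u ∈ Subgroup.zpowers v) (hv : v ∈ Subgroup.zpowers u) :
    mkP u 1 (one_comm u) = mkP v 1 (one_comm v) := by
  obtain ⟨e, he⟩ := hv
  obtain ⟨c, hc⟩ := hu
  have huv : u * v = v * u := by rw [← he]; exact (Commute.self_zpow u e).eq
  calc mkP u 1 (one_comm u) = mkz u 1 0 := mkP_congr _ _ (zpow_one u).symm (zpow_zero u).symm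
    _ = mkz u 1 (0 + 1 * e) := mkz_add u 1 0 e
    _ = mkP u v huv := mkP_congr _ huv (zpow_one u) (by rw [← he, show (0+1*e : ℤ) = e by ring])
    _ = mkP v u⁻¹ _ := mkP_swap u v huv
    _ = mkz v (1 : ℤ) (-c) := mkP_congr _ _ (zpow_one v).symm (by rw [zpow_neg]; exact congrArg Inv.inv hc.symm)
    _ = mkz v 1 (-c + 1 * c) := mkz_add v 1 (-c) c
    _ = mkP v 1 (one_comm v) := mkP_congr _ _ (zpow_one v) (by norm_num)


section Quat
open QuaternionGroup Subgroup
variable {n : ℕ}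

lemma two_eq_zero (hn : 1 ≤ n) (i : ZMod (2 * n)) (h : i + i = 0) :
    i = 0 ∨ i = (n : ZMod (2 * n)) := by
  have hNZ : NeZero (2 * n) := ⟨by omega⟩
  have hv : i.val < 2 * n := ZMod.val_lt i
  have hcast : ((i.val : ℕ) : ZMod (2 * n)) = i := ZMod.natCast_rightInverse i
  have h2 : ((i.val + i.val : ℕ) : ZMod (2 * n)) = 0 := by push_cast [hcast]; exact h
  rw [ZMod.natCast_eq_zero_iff] at h2
  obtain ⟨c, hc⟩ := h2
  have hcle : c ≤ 1 := by
    by_contra hcg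
    have h4 : 2 * n * 2 ≤ 2 * n * c := Nat.mul_le_mul_left _ (by omega)
    omega
  have : i.val = 0 ∨ i.val = n := by interval_cases c <;> omega
  rcases this with h' | h'
  · left; rw [← hcast, h']; norm_num
  · right; rw [← hcast, h']

lemma n_add_n : ((n : ZMod (2 * n))) + n = 0 := by
  rw [← Nat.cast_add, ← two_mul, ZMod.natCast_self]

lemma a_eq_pow (hn : 1 ≤ n) (i : ZMod (2 * n)) :
    (a i : QuaternionGroup n) = (a 1) ^ ((i.val : ℕ) : ℤ) := by
  have hNZ : NeZero (2 * n) := ⟨by omega⟩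
  rw [zpow_natCast, a_one_pow]
  exact congrArg a (ZMod.natCast_rightInverse i).symm

lemma xa_cube (j : ZMod (2 * n)) : (xa j : QuaternionGroup n) ^ (3 : ℕ) = xa (j + (n : ZMod (2 * n))) := by
  have h3 : (3 : ℕ) = 2 + 1 := rfl
  rw [h3, pow_succ, xa_sq, a_mul_xa]
  congr 1
  rw [sub_eq_add_neg, neg_eq_of_add_eq_zero_left n_add_n]

lemma exists_common (hn : 1 ≤ n) (g k : QuaternionGroup n) (h : g * k = k * g) :
    ∃ (x : QuaternionGroup n) (s t : ℤ), g = x ^ s ∧ k = x ^ t := by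
  have hNZ : NeZero (2 * n) := ⟨by omega⟩
  cases g with
  | a i =>
    cases k with
    | a j => exact ⟨a 1, i.val, j.val, a_eq_pow hn i, a_eq_pow hn j⟩
    | xa j =>
      rw [a_mul_xa, xa_mul_a] at h
      have heq : j - i = j + i := by simpa using h
      have h2 : i + i = 0 := by linear_combination -heq
      rcases two_eq_zero hn i h2 with rfl | rfl
      · exact ⟨xa j, 0, 1, by rw [zpow_zero, one_def], by rw [zpow_one]⟩
      · refine ⟨xa j, 2, 1, ?_, by rw [zpow_one]⟩
        rw [show (2 : ℤ) = ((2 : ℕ) : ℤ) by norm_num, zpow_natCast, xa_sq]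
  | xa i =>
    cases k with
    | a j =>
      rw [xa_mul_a, a_mul_xa] at h
      have heq : i + j = i - j := by simpa using h
      have h2 : j + j = 0 := by linear_combination heq
      rcases two_eq_zero hn j h2 with rfl | rfl
      · exact ⟨xa i, 1, 0, by rw [zpow_one], by rw [zpow_zero, one_def]⟩
      · refine ⟨xa i, 1, 2, by rw [zpow_one], ?_⟩
        rw [show (2 : ℤ) = ((2 : ℕ) : ℤ) by norm_num, zpow_natCast, xa_sq]
    | xa j =>
      rw [xa_mul_xa, xa_mul_xa] at h
      have heq : (n : ZMod (2 * n)) + j - i = n + i - j := by simpa using h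
      have h2 : (i - j) + (i - j) = 0 := by linear_combination -heq
      rcases two_eq_zero hn (i - j) h2 with h' | h'
      · have : i = j := by linear_combination h'
        subst this
        exact ⟨xa i, 1, 1, by rw [zpow_one], by rw [zpow_one]⟩
      · have hij : i = j + (n : ZMod (2 * n)) := by linear_combination h'
        refine ⟨xa j, 3, 1, ?_, by rw [zpow_one]⟩
        rw [show (3 : ℤ) = ((3 : ℕ) : ℤ) by norm_num, zpow_natCast, xa_cube, hij]

end Quat

lemma mem_pair_left (g k : G) : g ∈ Subgroup.closure {g, k} :=
  Subgroup.subset_closure (Set.mem_insert _ _)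

lemma mem_pair_right (g k : G) : k ∈ Subgroup.closure {g, k} :=
  Subgroup.subset_closure (Set.mem_insert_of_mem _ rfl)

lemma zpowers_isCyclic (x : G) : IsCyclic (Subgroup.zpowers x) := by
  refine ⟨⟨⟨x, mem_zpowers x⟩, fun y => ?_⟩⟩
  obtain ⟨m, hm⟩ := y.2
  exact ⟨m, Subtype.ext (by rw [SubgroupClass.coe_zpow]; exact hm)⟩

lemma exists_zpowers_of_le_zpowers (H : Subgroup G) (z : G) (hle : H ≤ Subgroup.zpowers z) :
    ∃ x, H = Subgroup.zpowers x := by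
  have h1 : IsCyclic (Subgroup.zpowers z) := zpowers_isCyclic z
  have h2 : IsCyclic H := Subgroup.isCyclic_of_le hle
  obtain ⟨g, hg⟩ := h2.exists_generator
  refine ⟨(g : G), le_antisymm ?_ (Subgroup.zpowers_le.mpr g.2)⟩
  intro h hh
  obtain ⟨m, hm⟩ := hg ⟨h, hh⟩
  exact ⟨m, by
    have := congrArg (Subtype.val) hm
    rw [SubgroupClass.coe_zpow] at this
    exact this⟩

lemma centralizer_pair_le (g k b : G) (hg : g * b = b * g) (hk : k * b = b * k) :
    Subgroup.closure {g, k} ≤ Subgroup.centralizer {b} := by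
  rw [Subgroup.closure_le]
  intro y hy
  rcases hy with hy | hy
  · rw [hy, SetLike.mem_coe, Subgroup.mem_centralizer_iff]
    intro z hz
    rw [Set.mem_singleton_iff] at hz
    rw [hz, hg]
  · rw [Set.mem_singleton_iff] at hy
    rw [hy, SetLike.mem_coe, Subgroup.mem_centralizer_iff]
    intro z hz
    rw [Set.mem_singleton_iff] at hz
    rw [hz, hk]

lemma closure_pair_comm (g k : G) (h : g * k = k * g) :
    ∀ a ∈ Subgroup.closure {g, k}, ∀ b ∈ Subgroup.closure {g, k}, a * b = b * a := by
  have hcg : Subgroup.closure {g, k} ≤ Subgroup.centralizer {g} :=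
    centralizer_pair_le g k g rfl h.symm
  have hck : Subgroup.closure {g, k} ≤ Subgroup.centralizer {k} :=
    centralizer_pair_le g k k h rfl
  intro a ha b hb
  have hbg : g * b = b * g := Subgroup.mem_centralizer_iff.mp (hcg hb) g rfl
  have hbk : k * b = b * k := Subgroup.mem_centralizer_iff.mp (hck hb) k rfl
  have hbc : Subgroup.closure {g, k} ≤ Subgroup.centralizer {b} :=
    centralizer_pair_le g k b hbg hbk
  exact (Subgroup.mem_centralizer_iff.mp (hbc ha) b rfl).symm

lemma closure_pair_mul (g k : G) : Subgroup.closure {g, k * g} = Subgroup.closure {g, k} := by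
  apply le_antisymm <;> rw [Subgroup.closure_le] <;> intro y hy <;> rcases hy with hy | hy
  · rw [show y = g from hy]; exact SetLike.mem_coe.mpr (mem_pair_left g k)
  · rw [Set.mem_singleton_iff] at hy
    rw [show y = k * g from hy]
    exact SetLike.mem_coe.mpr (mul_mem (mem_pair_right g k) (mem_pair_left g k))
  · rw [show y = g from hy]; exact SetLike.mem_coe.mpr (mem_pair_left g (k * g))
  · rw [Set.mem_singleton_iff] at hy
    rw [show y = k from hy]
    have h1 := mem_pair_right g (k * g)
    have h2 := mem_pair_left g (k * g)
    have := mul_mem h1 (inv_mem h2)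
    simpa using this

lemma closure_pair_swap (g k : G) : Subgroup.closure {k, g⁻¹} = Subgroup.closure {g, k} := by
  apply le_antisymm <;> rw [Subgroup.closure_le] <;> intro y hy <;> rcases hy with hy | hy
  · rw [show y = k from hy]; exact SetLike.mem_coe.mpr (mem_pair_right g k)
  · rw [Set.mem_singleton_iff] at hy
    rw [show y = g⁻¹ from hy]
    exact SetLike.mem_coe.mpr (inv_mem (mem_pair_left g k))
  · rw [show y = g from hy]
    have := inv_mem (mem_pair_right k g⁻¹)
    simpa using this
  · rw [Set.mem_singleton_iff] at hy
    rw [show y = k from hy]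
    exact SetLike.mem_coe.mpr (mem_pair_left k g⁻¹)

lemma closure_pair_one (x : G) : Subgroup.closure {x, (1 : G)} = Subgroup.zpowers x := by
  apply le_antisymm
  · rw [Subgroup.closure_le]
    intro y hy
    rcases hy with hy | hy
    · rw [show y = x from hy]; exact SetLike.mem_coe.mpr (mem_zpowers x)
    · rw [Set.mem_singleton_iff] at hy
      rw [show y = (1 : G) from hy]
      exact SetLike.mem_coe.mpr (one_mem _)
  · exact Subgroup.zpowers_le.mpr (mem_pair_left x 1)


section Quat2
open QuaternionGroup Subgroup
variable {n : ℕ}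

lemma abelian_eq_zpowers (hn : 1 ≤ n) (H : Subgroup (QuaternionGroup n))
    (hH : ∀ a ∈ H, ∀ b ∈ H, a * b = b * a) : ∃ x, H = Subgroup.zpowers x := by
  by_cases hxa : ∃ j, xa j ∈ H
  · obtain ⟨j, hj⟩ := hxa
    refine ⟨xa j, le_antisymm ?_ (Subgroup.zpowers_le.mpr hj)⟩
    intro h hh
    cases h with
    | a i =>
      have hcomm := hH _ hh _ hj
      rw [a_mul_xa, xa_mul_a] at hcomm
      have heq : j - i = j + i := by simpa using hcomm
      have h2 : i + i = 0 := by linear_combination -heq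
      rcases two_eq_zero hn i h2 with rfl | rfl
      · rw [← one_def]
        exact one_mem _
      · exact ⟨(2 : ℤ), by
          show xa j ^ (2 : ℤ) = a (n : ZMod (2 * n))
          rw [show (2 : ℤ) = ((2 : ℕ) : ℤ) by norm_num, zpow_natCast, xa_sq]⟩
    | xa i =>
      have hcomm := hH _ hh _ hj
      rw [xa_mul_xa, xa_mul_xa] at hcomm
      have heq : (n : ZMod (2 * n)) + j - i = (n : ZMod (2 * n)) + i - j := by
        simpa using hcomm
      have h2 : (i - j) + (i - j) = 0 := by linear_combination -heq
      rcases two_eq_zero hn (i - j) h2 with h' | h'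
      · have hij : i = j := by linear_combination h'
        rw [hij]
        exact mem_zpowers _
      · have hij : i = j + (n : ZMod (2 * n)) := by linear_combination h'
        exact ⟨(3 : ℤ), by
          show xa j ^ (3 : ℤ) = xa i
          rw [show (3 : ℤ) = ((3 : ℕ) : ℤ) by norm_num, zpow_natCast, xa_cube, hij]⟩
  · push_neg at hxa
    apply exists_zpowers_of_le_zpowers H (a 1)
    intro h hh
    cases h with
    | a i => exact ⟨(i.val : ℤ), (a_eq_pow hn i).symm⟩
    | xa i => exact absurd hh (hxa i)

lemma exists_normal_form (hn : 1 ≤ n) (p : CommPairs (QuaternionGroup n)) :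
    ∃ y : QuaternionGroup n,
      Quot.mk (genRel (QuaternionGroup n)) p = mkP y 1 (one_comm y) ∧
      Subgroup.zpowers y = Subgroup.closure {p.1.1, p.1.2} := by
  obtain ⟨⟨g, k⟩, hc⟩ := p
  obtain ⟨x, s, t, hg, hk⟩ := exists_common hn g k hc
  subst hg; subst hk
  refine ⟨x ^ (Int.gcd s t : ℤ), ?_, zpowers_gcd x s t⟩
  have h1 : Quot.mk (genRel _) (⟨(x ^ s, x ^ t), hc⟩ : CommPairs (QuaternionGroup n)) =
      mkz x s t := rfl
  rw [h1, mkz_gcd x s t]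
  exact mkP_congr _ _ rfl (zpow_zero x)

end Quat2

end R1Aux

open R1Aux

theorem dicyclic_r1_eq_num_abelian_subgroups (n : ℕ) (hn : 1 ≤ n) :
    Nat.card (Quot (genRel (QuaternionGroup n))) =
      Nat.card {H : Subgroup (QuaternionGroup n) // ∀ a ∈ H, ∀ b ∈ H, a * b = b * a} := by
  classical
  refine Nat.card_eq_of_bijective
    (Quot.lift
      (fun p : CommPairs (QuaternionGroup n) =>
        (⟨Subgroup.closure {p.1.1, p.1.2}, closure_pair_comm _ _ p.2⟩ :
          {H : Subgroup (QuaternionGroup n) // ∀ a ∈ H, ∀ b ∈ H, a * b = b * a}))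
      ?_) ⟨?_, ?_⟩
  · rintro p q (hq | hq)
    · apply Subtype.ext
      rw [Prod.ext_iff] at hq
      obtain ⟨h1, h2⟩ := hq
      show Subgroup.closure {p.1.1, p.1.2} = Subgroup.closure {q.1.1, q.1.2}
      rw [h1, h2]
      exact (closure_pair_mul p.1.1 p.1.2).symm
    · apply Subtype.ext
      rw [Prod.ext_iff] at hq
      obtain ⟨h1, h2⟩ := hq
      show Subgroup.closure {p.1.1, p.1.2} = Subgroup.closure {q.1.1, q.1.2}
      rw [h1, h2]
      exact (closure_pair_swap p.1.1 p.1.2).symm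
  · intro u v
    induction u using Quot.ind with
    | _ p =>
      induction v using Quot.ind with
      | _ q =>
        intro h
        have hpq : Subgroup.closure {p.1.1, p.1.2} = Subgroup.closure {q.1.1, q.1.2} :=
          congrArg Subtype.val h
        obtain ⟨y, hy1, hy2⟩ := exists_normal_form hn p
        obtain ⟨y', hy1', hy2'⟩ := exists_normal_form hn q
        have hyy : Subgroup.zpowers y = Subgroup.zpowers y' := by
          rw [hy2, hpq, ← hy2']
        have hu : y ∈ Subgroup.zpowers y' := hyy ▸ Subgroup.mem_zpowers y
        have hv : y' ∈ Subgroup.zpowers y := hyy.symm ▸ Subgroup.mem_zpowers y'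
        rw [hy1, hy1']
        exact mk_one_eq y y' hu hv
  · rintro ⟨H, hH⟩
    obtain ⟨x, hx⟩ := abelian_eq_zpowers hn H hH
    refine ⟨Quot.mk _ (⟨(x, 1), one_comm x⟩ : CommPairs (QuaternionGroup n)), ?_⟩
    apply Subtype.ext
    show Subgroup.closure {x, (1 : QuaternionGroup n)} = H
    rw [closure_pair_one, hx]
end

section
/- Let p be a prime and n ≥ 1. Let a_p(n) denote the number of orbits of the action of SL(2, ℤ/pℤ) on the set of n×2 matrices with entries in ℤ/pℤ, acting by right multiplication M ↦ M·A. Then (p² − 1) · a_p(n) = p^{2n−1} + p^{n+1} − p^{n−1} + p² − p − 1; equivalently a_p(n) = (p^{2n−1} + p^{n+1} − p^{n−1} + p² − p − 1)/(p² − 1). (This number equals the invariant r(ℤ_p^n) of the paper.) -/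
/-- The orbit relation of the right-multiplication action of `SL(2, ℤ/pℤ)`
on `n × 2` matrices over `ℤ/pℤ`. -/
def slOrbRel (p n : ℕ) :
    Matrix (Fin n) (Fin 2) (ZMod p) → Matrix (Fin n) (Fin 2) (ZMod p) → Prop :=
  fun M N => ∃ A : Matrix.SpecialLinearGroup (Fin 2) (ZMod p),
    M * (A : Matrix (Fin 2) (Fin 2) (ZMod p)) = N

open Matrix

section Aux

variable (p : ℕ) [Fact p.Prime]

local notation "F" => ZMod p

/-- graph of a function, projected to first coordinate -/
def graphEquiv1 (f : F → F) : {xy : F × F // xy.2 = f xy.1} ≃ F where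
  toFun s := s.1.1
  invFun a := ⟨(a, f a), rfl⟩
  left_inv s := by
    obtain ⟨⟨a, c⟩, h⟩ := s
    simp only at h
    simp [h]
  right_inv a := rfl

def graphEquiv2 (f : F → F) : {xy : F × F // xy.1 = f xy.2} ≃ F where
  toFun s := s.1.2
  invFun a := ⟨(f a, a), rfl⟩
  left_inv s := by
    obtain ⟨⟨a, c⟩, h⟩ := s
    simp only at h
    simp [h]
  right_inv a := rfl

lemma card_fiber_det (c d : F) (h : ¬(c = 0 ∧ d = 0)) :
    Fintype.card {ab : F × F // ab.1 * d - ab.2 * c = 1} = p := by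
  rcases eq_or_ne d 0 with hd | hd
  · have hc : c ≠ 0 := by tauto
    have e : {ab : F × F // ab.1 * d - ab.2 * c = 1} ≃ F :=
      (Equiv.subtypeEquivRight (q := fun xy : F × F => xy.2 = (fun _ : F => -c⁻¹) xy.1)
        (fun ab => by
          subst hd
          constructor
          · intro h2
            show ab.2 = -c⁻¹
            field_simp
            linear_combination -h2
          · intro h2
            show ab.1 * 0 - ab.2 * c = 1
            rw [show ab.2 = -c⁻¹ from h2]
            field_simp; ring)).trans (graphEquiv1 p (fun _ : F => -c⁻¹))
    rw [Fintype.card_congr e, ZMod.card]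
  · have e : {ab : F × F // ab.1 * d - ab.2 * c = 1} ≃ F :=
      (Equiv.subtypeEquivRight (q := fun xy : F × F => xy.1 = (fun b : F => (1 + b * c) * d⁻¹) xy.2)
        (fun ab => by
          constructor
          · intro h2
            show ab.1 = (1 + ab.2 * c) * d⁻¹
            field_simp
            linear_combination h2
          · intro h2
            show ab.1 * d - ab.2 * c = 1
            rw [show ab.1 = (1 + ab.2 * c) * d⁻¹ from h2]
            field_simp; ring)).trans (graphEquiv2 p (fun b : F => (1 + b * c) * d⁻¹))
    rw [Fintype.card_congr e, ZMod.card]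

lemma card_fiber_tr (b : F) :
    Fintype.card {ac : F × F // ac.1 * (2 - ac.1) - b * ac.2 = 1} = p := by
  rcases eq_or_ne b 0 with hb | hb
  · have e : {ac : F × F // ac.1 * (2 - ac.1) - b * ac.2 = 1} ≃ F :=
      (Equiv.subtypeEquivRight (q := fun xy : F × F => xy.1 = (fun _ : F => (1 : F)) xy.2)
        (fun ac => by
          subst hb
          constructor
          · intro h2
            show ac.1 = 1
            have h3 : (ac.1 - 1) ^ 2 = 0 := by linear_combination -h2
            have h4 : ac.1 - 1 = 0 := by
              exact pow_eq_zero_iff (n := 2) (by norm_num) |>.mp h3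
            linear_combination h4
          · intro h2
            show ac.1 * (2 - ac.1) - 0 * ac.2 = 1
            rw [show ac.1 = 1 from h2]
            ring)).trans (graphEquiv2 p (fun _ : F => (1 : F)))
    rw [Fintype.card_congr e, ZMod.card]
  · have e : {ac : F × F // ac.1 * (2 - ac.1) - b * ac.2 = 1} ≃ F :=
      (Equiv.subtypeEquivRight (q := fun xy : F × F => xy.2 = (fun a : F => (a * (2 - a) - 1) * b⁻¹) xy.1)
        (fun ac => by
          constructor
          · intro h2
            show ac.2 = (ac.1 * (2 - ac.1) - 1) * b⁻¹
            field_simp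
            linear_combination -h2
          · intro h2
            show ac.1 * (2 - ac.1) - b * ac.2 = 1
            rw [show ac.2 = (ac.1 * (2 - ac.1) - 1) * b⁻¹ from h2]
            field_simp; ring)).trans (graphEquiv1 p (fun a : F => (a * (2 - a) - 1) * b⁻¹))
    rw [Fintype.card_congr e, ZMod.card]

end Aux

section Counts

variable (p : ℕ) [Fact p.Prime]

local notation "F" => ZMod p
local notation "SL2" => Matrix.SpecialLinearGroup (Fin 2) (ZMod p)

def fiberDetEquiv (cd : F × F) :
    {A : SL2 // (A.1 1 0, A.1 1 1) = cd} ≃ {ab : F × F // ab.1 * cd.2 - ab.2 * cd.1 = 1} where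
  toFun A := ⟨(A.1.1 0 0, A.1.1 0 1), by
    have h := A.1.2
    rw [Matrix.det_fin_two] at h
    have h1 : A.1.1 1 0 = cd.1 := congrArg Prod.fst A.2
    have h2 : A.1.1 1 1 = cd.2 := congrArg Prod.snd A.2
    show A.1.1 0 0 * cd.2 - A.1.1 0 1 * cd.1 = 1
    linear_combination h - A.1.1 0 0 * h2 + A.1.1 0 1 * h1⟩
  invFun ab := ⟨⟨!![ab.1.1, ab.1.2; cd.1, cd.2], by
      rw [Matrix.det_fin_two_of]; exact ab.2⟩, by
      simp⟩
  left_inv A := by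
    obtain ⟨⟨M, hdet⟩, hfib⟩ := A
    apply Subtype.ext; apply Subtype.ext
    show !![M 0 0, M 0 1; cd.1, cd.2] = M
    rw [← hfib]
    exact (Matrix.eta_fin_two M).symm
  right_inv ab := by
    apply Subtype.ext
    rfl

lemma card_SL2 : Fintype.card SL2 = p ^ 3 - p := by
  have e : SL2 ≃ Σ cd : F × F, {A : SL2 // (A.1 1 0, A.1 1 1) = cd} :=
    (Equiv.sigmaFiberEquiv (fun A : SL2 => (A.1 1 0, A.1 1 1))).symm
  rw [Fintype.card_congr e, Fintype.card_sigma]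
  have step : ∀ cd : F × F, Fintype.card {A : SL2 // (A.1 1 0, A.1 1 1) = cd} =
      if cd = (0, 0) then 0 else p := by
    intro cd
    rw [Fintype.card_congr (fiberDetEquiv p cd)]
    split_ifs with hcd
    · subst hcd
      rw [Fintype.card_eq_zero_iff]
      exact ⟨fun x => by have := x.2; simp at this⟩
    · apply card_fiber_det
      intro ⟨h1, h2⟩
      exact hcd (by rw [Prod.ext_iff]; exact ⟨h1, h2⟩)
  rw [Finset.sum_congr rfl (fun cd _ => step cd), Finset.sum_ite]
  simp only [Finset.sum_const_zero, Finset.sum_const, smul_eq_mul, zero_add]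
  rw [Finset.filter_ne' Finset.univ ((0, 0) : F × F), Finset.card_erase_of_mem (Finset.mem_univ _)]
  rw [Finset.card_univ, Fintype.card_prod, ZMod.card]
  rw [Nat.sub_mul, one_mul]
  congr 1
  ring

def fiberTrEquiv (b : F) :
    {X : {A : SL2 // A.1 0 0 + A.1 1 1 = 2} // X.1.1 0 1 = b} ≃
      {ac : F × F // ac.1 * (2 - ac.1) - b * ac.2 = 1} where
  toFun X := ⟨(X.1.1.1 0 0, X.1.1.1 1 0), by
    have h := X.1.1.2
    rw [Matrix.det_fin_two] at h
    have htr := X.1.2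
    have hb : X.1.1.1 0 1 = b := X.2
    show X.1.1.1 0 0 * (2 - X.1.1.1 0 0) - b * X.1.1.1 1 0 = 1
    linear_combination h - X.1.1.1 0 0 * htr + X.1.1.1 1 0 * hb⟩
  invFun ac := ⟨⟨⟨!![ac.1.1, b; ac.1.2, 2 - ac.1.1], by
      rw [Matrix.det_fin_two_of]; linear_combination ac.2⟩, by
      show ac.1.1 + (2 - ac.1.1) = 2; ring⟩, rfl⟩
  left_inv X := by
    obtain ⟨⟨⟨M, hdet⟩, htr⟩, hb⟩ := X
    apply Subtype.ext; apply Subtype.ext; apply Subtype.ext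
    have htr' : M 0 0 + M 1 1 = 2 := htr
    have hb' : M 0 1 = b := hb
    show !![M 0 0, b; M 1 0, 2 - M 0 0] = M
    rw [← hb', show (2 : F) - M 0 0 = M 1 1 by linear_combination -htr']
    exact (Matrix.eta_fin_two M).symm
  right_inv ac := by
    apply Subtype.ext
    rfl

lemma card_tr2 : Fintype.card {A : SL2 // A.1 0 0 + A.1 1 1 = 2} = p ^ 2 := by
  have e : {A : SL2 // A.1 0 0 + A.1 1 1 = 2} ≃
      Σ b : F, {X : {A : SL2 // A.1 0 0 + A.1 1 1 = 2} // X.1.1 0 1 = b} :=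
    (Equiv.sigmaFiberEquiv (fun X : {A : SL2 // A.1 0 0 + A.1 1 1 = 2} => X.1.1 0 1)).symm
  rw [Fintype.card_congr e, Fintype.card_sigma]
  have step : ∀ b : F, Fintype.card {X : {A : SL2 // A.1 0 0 + A.1 1 1 = 2} // X.1.1 0 1 = b}
      = p := by
    intro b
    rw [Fintype.card_congr (fiberTrEquiv p b)]
    exact card_fiber_tr p b
  rw [Finset.sum_congr rfl (fun b _ => step b)]
  simp [ZMod.card, sq]

end Counts

section Fix

variable (p : ℕ) [Fact p.Prime]

local notation "F" => ZMod p
local notation "SL2" => Matrix.SpecialLinearGroup (Fin 2) (ZMod p)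

noncomputable local instance : DecidableEq (Matrix.SpecialLinearGroup (Fin 2) (ZMod p)) :=
  Classical.decEq _

lemma det_sub_one (A : SL2) :
    Matrix.det (A.1 - 1) = 2 - (A.1 0 0 + A.1 1 1) := by
  have h := A.2
  rw [Matrix.det_fin_two] at h
  rw [Matrix.det_fin_two]
  simp only [Matrix.sub_apply, Matrix.one_apply_eq,
    Matrix.one_apply_ne (show (0 : Fin 2) ≠ 1 by decide),
    Matrix.one_apply_ne (show (1 : Fin 2) ≠ 0 by decide)]
  linear_combination h

lemma card_fixrows (A : SL2) :
    Fintype.card {r : Fin 2 → F // r ᵥ* (A : Matrix (Fin 2) (Fin 2) F) = r} =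
      if A = 1 then p ^ 2 else if A.1 0 0 + A.1 1 1 = 2 then p else 1 := by
  have key : ∀ r : Fin 2 → F, (r ᵥ* (A : Matrix (Fin 2) (Fin 2) F) = r) ↔
      r ᵥ* (A.1 - 1) = 0 := by
    intro r
    rw [Matrix.vecMul_sub, Matrix.vecMul_one, sub_eq_zero]
  split_ifs with h1 h2
  · subst h1
    have e : {r : Fin 2 → F // r ᵥ* ((1 : SL2) : Matrix (Fin 2) (Fin 2) F) = r} ≃ (Fin 2 → F) :=
      Equiv.subtypeUnivEquiv (fun r => by
        rw [Matrix.SpecialLinearGroup.coe_one, Matrix.vecMul_one])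
    rw [Fintype.card_congr e, Fintype.card_fun, ZMod.card, Fintype.card_fin]
  · -- trace 2, A ≠ 1
    have hdet0 : Matrix.det (A.1 - 1) = 0 := by rw [det_sub_one, h2, sub_self]
    have hB0 : A.1 - 1 ≠ 0 := sub_ne_zero.mpr (fun h => h1 (Subtype.ext h))
    set K := LinearMap.ker (Matrix.vecMulLinear (A.1 - 1)) with hK
    have e : {r : Fin 2 → F // r ᵥ* (A : Matrix (Fin 2) (Fin 2) F) = r} ≃ K :=
      Equiv.subtypeEquivRight (fun r => by
        rw [key]
        simp [hK, LinearMap.mem_ker, Matrix.vecMulLinear_apply]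
        rw [Matrix.vecMul_sub, Matrix.vecMul_one])
    haveI : Fintype K := Fintype.ofFinite _
    rw [Fintype.card_congr e]
    have hcard := Module.card_eq_pow_finrank (K := F) (V := K)
    rw [ZMod.card] at hcard
    -- finrank = 1
    have hne : K ≠ ⊥ := by
      obtain ⟨v, hv0, hv⟩ := Matrix.exists_vecMul_eq_zero_iff.mpr hdet0
      intro hbot
      apply hv0
      have : v ∈ K := by rw [hK, LinearMap.mem_ker, Matrix.vecMulLinear_apply]; exact hv
      rw [hbot, Submodule.mem_bot] at this
      exact this
    have hntop : K ≠ ⊤ := by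
      intro htop
      apply hB0
      apply Matrix.ext
      intro i j
      have hmem : Pi.single i (1 : F) ∈ K := htop ▸ Submodule.mem_top
      have : Pi.single i (1 : F) ᵥ* (A.1 - 1) = 0 := by
        rw [hK, LinearMap.mem_ker, Matrix.vecMulLinear_apply] at hmem; exact hmem
      rw [Matrix.single_one_vecMul] at this
      rw [Matrix.zero_apply]
      exact congrFun this j
    have hlt : Module.finrank F K < 2 := by
      have := Submodule.finrank_lt (K := F) (V := Fin 2 → F) hntop
      rwa [Module.finrank_fintype_fun_eq_card, Fintype.card_fin] at this
    have hpos : 0 < Module.finrank F K :=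
      Module.finrank_pos_iff.mpr (Submodule.nontrivial_iff_ne_bot.mpr hne)
    have : Module.finrank F K = 1 := by omega
    rw [hcard, this, pow_one]
  · -- no fixed vectors except 0
    have hdet : Matrix.det (A.1 - 1) ≠ 0 := by
      rw [det_sub_one, sub_ne_zero]
      exact fun h => h2 h.symm
    have hinj : Function.Injective (A.1 - 1).vecMul :=
      Matrix.vecMul_injective_iff_isUnit.mpr
        ((Matrix.isUnit_iff_isUnit_det _).mpr (isUnit_iff_ne_zero.mpr hdet))
    rw [Fintype.card_eq_one_iff]
    refine ⟨⟨0, by rw [Matrix.zero_vecMul]⟩, fun y => Subtype.ext ?_⟩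
    have : y.1 ᵥ* (A.1 - 1) = (0 : Fin 2 → F) ᵥ* (A.1 - 1) := by
      rw [(key y.1).mp y.2, Matrix.zero_vecMul]
    exact hinj this

end Fix

set_option maxHeartbeats 1000000 in
theorem orbit_count_formula (p n : ℕ) [Fact p.Prime] (hn : 1 ≤ n) :
    (p ^ 2 - 1) * Nat.card (Quot (slOrbRel p n)) =
      p ^ (2 * n - 1) + p ^ (n + 1) - p ^ (n - 1) + p ^ 2 - p - 1 := by
  classical
  set G := Matrix.SpecialLinearGroup (Fin 2) (ZMod p) with hG
  set X := Matrix (Fin n) (Fin 2) (ZMod p) with hX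
  -- cancellation helper
  have hcan : ∀ (M : X) (A : G), (M * (A : Matrix (Fin 2) (Fin 2) (ZMod p))) *
      ((A⁻¹ : G) : Matrix (Fin 2) (Fin 2) (ZMod p)) = M := by
    intro M A
    rw [Matrix.mul_assoc, ← Matrix.SpecialLinearGroup.coe_mul, mul_inv_cancel,
      Matrix.SpecialLinearGroup.coe_one, Matrix.mul_one]
  letI : SMul G X := ⟨fun A M => M * ((A⁻¹ : G) : Matrix (Fin 2) (Fin 2) (ZMod p))⟩
  have hsmul_def : ∀ (A : G) (M : X),
      A • M = M * ((A⁻¹ : G) : Matrix (Fin 2) (Fin 2) (ZMod p)) := fun _ _ => rfl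
  letI : MulAction G X :=
    { one_smul := fun M => by
        rw [hsmul_def, inv_one, Matrix.SpecialLinearGroup.coe_one, Matrix.mul_one]
      mul_smul := fun A B M => by
        rw [hsmul_def, hsmul_def, hsmul_def, _root_.mul_inv_rev,
          Matrix.SpecialLinearGroup.coe_mul, ← Matrix.mul_assoc] }
  -- the two quotients agree
  have hrel : ∀ M N : X, slOrbRel p n M N ↔ (MulAction.orbitRel G X).r M N := by
    intro M N
    constructor
    · rintro ⟨A, hA⟩
      exact ⟨A, by show A • N = M; rw [hsmul_def, ← hA, hcan]⟩
    · rintro ⟨A, hA⟩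
      refine ⟨A, ?_⟩
      have hA' : A • N = M := hA
      rw [hsmul_def] at hA'
      calc M * ((A : G) : Matrix (Fin 2) (Fin 2) (ZMod p))
          = (N * ((A⁻¹ : G) : Matrix (Fin 2) (Fin 2) (ZMod p))) *
            ((A : G) : Matrix (Fin 2) (Fin 2) (ZMod p)) := by rw [hA']
        _ = N := by
            rw [Matrix.mul_assoc, ← Matrix.SpecialLinearGroup.coe_mul, inv_mul_cancel,
              Matrix.SpecialLinearGroup.coe_one, Matrix.mul_one]
  have hquot : Nat.card (Quot (slOrbRel p n)) =
      Nat.card (MulAction.orbitRel.Quotient G X) :=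
    Nat.card_congr (Quot.congrRight hrel)
  -- Fintype instances
  letI : Fintype (MulAction.orbitRel.Quotient G X) := Fintype.ofFinite _
  letI : ∀ A : G, Fintype (MulAction.fixedBy X A) := fun A => Fintype.ofFinite _
  have burnside := MulAction.sum_card_fixedBy_eq_card_orbits_mul_card_group G X
  -- fixed points of each A
  have hfix : ∀ A : G, Fintype.card (MulAction.fixedBy X A) =
      (Fintype.card {r : Fin 2 → ZMod p //
        r ᵥ* (A : Matrix (Fin 2) (Fin 2) (ZMod p)) = r}) ^ n := by
    intro A
    have hcan2 : ∀ (M : X) (B : G), (M * ((B⁻¹ : G) : Matrix (Fin 2) (Fin 2) (ZMod p))) *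
        ((B : G) : Matrix (Fin 2) (Fin 2) (ZMod p)) = M := by
      intro M B
      have := hcan M B⁻¹
      rwa [inv_inv] at this
    have hmem : ∀ M : X, (A • M = M) ↔ ∀ i, (M i) ᵥ* (A : Matrix (Fin 2) (Fin 2) (ZMod p)) = M i := by
      intro M
      constructor
      · intro h
        rw [hsmul_def] at h
        have h2 : M * ((A : G) : Matrix (Fin 2) (Fin 2) (ZMod p)) = M := by
          calc M * ((A : G) : Matrix (Fin 2) (Fin 2) (ZMod p))
              = (M * ((A⁻¹ : G) : Matrix (Fin 2) (Fin 2) (ZMod p))) *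
                ((A : G) : Matrix (Fin 2) (Fin 2) (ZMod p)) := by rw [h]
            _ = M := hcan2 M A
        exact fun i => congrFun h2 i
      · intro h
        rw [hsmul_def]
        have h2 : M * ((A : G) : Matrix (Fin 2) (Fin 2) (ZMod p)) = M := funext h
        calc M * ((A⁻¹ : G) : Matrix (Fin 2) (Fin 2) (ZMod p))
            = (M * ((A : G) : Matrix (Fin 2) (Fin 2) (ZMod p))) *
              ((A⁻¹ : G) : Matrix (Fin 2) (Fin 2) (ZMod p)) := by rw [h2]
          _ = M := hcan M A
    have e : MulAction.fixedBy X A ≃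
        (Fin n → {r : Fin 2 → ZMod p // r ᵥ* (A : Matrix (Fin 2) (Fin 2) (ZMod p)) = r}) :=
      { toFun := fun M i => ⟨M.1 i, (hmem M.1).mp M.2 i⟩
        invFun := fun f => ⟨Matrix.of (fun i => (f i).1), (hmem _).mpr (fun i => (f i).2)⟩
        left_inv := fun M => Subtype.ext rfl
        right_inv := fun f => funext (fun i => Subtype.ext rfl) }
    rw [Fintype.card_congr e, Fintype.card_fun, Fintype.card_fin]
  -- evaluate the sum
  have hval : ∀ A : G, Fintype.card (MulAction.fixedBy X A) =
      if A.1 0 0 + A.1 1 1 = 2 then (if A = 1 then p ^ (2 * n) else p ^ n) else 1 := by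
    intro A
    rw [hfix A, card_fixrows p A]
    by_cases h1 : A = 1
    · have ht : A.1 0 0 + A.1 1 1 = 2 := by
        subst h1
        rw [Matrix.SpecialLinearGroup.coe_one, Matrix.one_apply_eq, Matrix.one_apply_eq]
        norm_num
      rw [if_pos h1, if_pos ht, if_pos h1, ← pow_mul]
    · rw [if_neg h1]
      by_cases h2 : A.1 0 0 + A.1 1 1 = 2
      · rw [if_pos h2, if_pos h2, if_neg h1]
      · rw [if_neg h2, if_neg h2, one_pow]
  rw [Finset.sum_congr rfl (fun A _ => hval A)] at burnside
  rw [Finset.sum_ite, Finset.sum_const, smul_eq_mul, mul_one] at burnside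
  have hcard_t2 : (Finset.univ.filter (fun A : G => A.1 0 0 + A.1 1 1 = 2)).card = p ^ 2 := by
    rw [← Fintype.card_subtype]
    exact card_tr2 p
  have hcard_not : (Finset.univ.filter (fun A : G => ¬(A.1 0 0 + A.1 1 1 = 2))).card
      = (p ^ 3 - p) - p ^ 2 := by
    have := Finset.card_filter_add_card_filter_not
      (s := (Finset.univ : Finset G)) (p := fun A : G => A.1 0 0 + A.1 1 1 = 2)
    rw [Finset.card_univ, card_SL2 p, hcard_t2] at this
    omega
  have hpow_le : p ^ n ≤ p ^ (2 * n) :=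
    Nat.pow_le_pow_right (Nat.Prime.pos Fact.out) (by omega)
  have hsum1 : ∑ A ∈ Finset.univ.filter (fun A : G => A.1 0 0 + A.1 1 1 = 2),
      (if A = 1 then p ^ (2 * n) else p ^ n) =
      p ^ 2 * p ^ n + (p ^ (2 * n) - p ^ n) := by
    have step : ∀ A ∈ Finset.univ.filter (fun A : G => A.1 0 0 + A.1 1 1 = 2),
        (if A = 1 then p ^ (2 * n) else p ^ n) =
        p ^ n + (if A = 1 then p ^ (2 * n) - p ^ n else 0) := by
      intro A _
      by_cases h : A = 1
      · rw [if_pos h, if_pos h]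
        omega
      · rw [if_neg h, if_neg h]
        omega
    rw [Finset.sum_congr rfl step, Finset.sum_add_distrib, Finset.sum_const, smul_eq_mul,
      hcard_t2, Finset.sum_ite_eq' _ (1 : G)]
    have h1mem : (1 : G) ∈ Finset.univ.filter (fun A : G => A.1 0 0 + A.1 1 1 = 2) := by
      rw [Finset.mem_filter]
      refine ⟨Finset.mem_univ _, ?_⟩
      rw [Matrix.SpecialLinearGroup.coe_one, Matrix.one_apply_eq, Matrix.one_apply_eq]
      norm_num
    rw [if_pos h1mem]
  rw [hsum1, hcard_not, Fintype.card_eq_nat_card, ← hquot, card_SL2 p] at burnside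
  -- now pure arithmetic
  set a := Nat.card (Quot (slOrbRel p n)) with ha
  obtain ⟨m, rfl⟩ : ∃ m, n = m + 1 := ⟨n - 1, by omega⟩
  rw [show 2 * (m + 1) = m + (m + 2) from by omega] at burnside
  rw [show 2 * (m + 1) - 1 = m + (m + 1) from by omega,
    show m + 1 - 1 = m from by omega]
  have hp2 : 2 ≤ p := Nat.Prime.two_le Fact.out
  have hq1 : 1 ≤ p ^ m := Nat.one_le_pow _ _ (by omega)
  have hpp : p + 1 ≤ p ^ 2 := by nlinarith
  have l1 : p ^ (m + 1) ≤ p ^ (m + (m + 2)) := Nat.pow_le_pow_right (by omega) (by omega)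
  have l2 : p ≤ p ^ 3 := by nlinarith
  have l3 : p ^ 2 ≤ p ^ 3 - p := by
    have : p ^ 2 + p ≤ p ^ 3 := by nlinarith
    omega
  have l4 : p ^ m ≤ p ^ (m + (m + 1)) + p ^ (m + 2) :=
    le_trans (Nat.pow_le_pow_right (by omega) (by omega)) (Nat.le_add_right _ _)
  have l5 : p ≤ p ^ (m + (m + 1)) + p ^ (m + 2) - p ^ m + p ^ 2 :=
    le_trans (by nlinarith) (Nat.le_add_left _ _)
  have l6 : 1 ≤ p ^ (m + (m + 1)) + p ^ (m + 2) - p ^ m + p ^ 2 - p := by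
    have h1 : 1 + p ≤ p ^ (m + (m + 1)) + p ^ (m + 2) - p ^ m + p ^ 2 :=
      le_trans (by omega) (Nat.le_add_left _ _)
    omega
  have l7 : 1 ≤ p ^ 2 := by nlinarith
  zify [l1, l2, l3, l4, l5, l6, l7] at burnside ⊢
  have hp0 : (p : ℤ) ≠ 0 := by positivity
  apply mul_left_cancel₀ hp0
  linear_combination -burnside
end

section
/- Let n ≥ 1 and let a_2(n) denote the number of orbits of the action of SL(2, ℤ/2ℤ) on the set of n×2 matrices with entries in ℤ/2ℤ, acting by right multiplication M ↦ M·A. Then 3 · a_2(n) = (2ⁿ + 1)(2^{n−1} + 1); equivalently a_2(n) = (2ⁿ + 1)(2^{n−1} + 1)/3, giving the sequence 2, 5, 15, 51, 187, 715, … . -/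
open Matrix MulAction

abbrev SL2 : Type := Matrix.SpecialLinearGroup (Fin 2) (ZMod 2)

lemma mul_inv_coe (M : Matrix (Fin n) (Fin 2) (ZMod 2)) (A : SL2) :
    (M * (A : Matrix (Fin 2) (Fin 2) (ZMod 2))) * ((A⁻¹ : SL2) : Matrix (Fin 2) (Fin 2) (ZMod 2)) = M := by
  rw [Matrix.mul_assoc, ← Matrix.SpecialLinearGroup.coe_mul]
  simp

instance slAct (n : ℕ) : MulAction SL2 (Matrix (Fin n) (Fin 2) (ZMod 2)) where
  smul A M := M * ((A⁻¹ : SL2) : Matrix (Fin 2) (Fin 2) (ZMod 2))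
  one_smul M := by
    show M * ((1 : SL2)⁻¹ : SL2).val = M
    simp
  mul_smul A B M := by
    show M * (((A*B)⁻¹ : SL2)).val = (M * (B⁻¹ : SL2).val) * (A⁻¹ : SL2).val
    rw [Matrix.mul_assoc, ← Matrix.SpecialLinearGroup.coe_mul, _root_.mul_inv_rev]

lemma rel_eq (n : ℕ) : slOrbRel 2 n = (orbitRel SL2 (Matrix (Fin n) (Fin 2) (ZMod 2))).r := by
  funext M N
  apply propext
  constructor
  · rintro ⟨A, h⟩
    refine ⟨A, ?_⟩
    show N * ((A⁻¹) : SL2).val = M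
    rw [← h]
    exact mul_inv_coe M A
  · rintro ⟨A, h⟩
    refine ⟨A, ?_⟩
    change N * (A⁻¹ : SL2).val = M at h
    rw [← h, Matrix.mul_assoc, ← Matrix.SpecialLinearGroup.coe_mul]
    simp

instance (n : ℕ) (A : SL2) :
    DecidablePred (· ∈ fixedBy (Matrix (Fin n) (Fin 2) (ZMod 2)) A) :=
  fun M => decidable_of_iff (A • M = M) Iff.rfl

instance (n : ℕ) : DecidableRel (orbitRel SL2 (Matrix (Fin n) (Fin 2) (ZMod 2))).r :=
  fun M N => decidable_of_iff (∃ A : SL2, A • N = M) Iff.rfl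

instance (n : ℕ) : Fintype (orbitRel.Quotient SL2 (Matrix (Fin n) (Fin 2) (ZMod 2))) :=
  @Quotient.fintype _ _ (orbitRel SL2 (Matrix (Fin n) (Fin 2) (ZMod 2)))
    (fun M N => decidable_of_iff (∃ A : SL2, A • N = M) Iff.rfl)

noncomputable def c (A : SL2) : ℕ :=
  Nat.card {v : Fin 2 → ZMod 2 // v ᵥ* (A : Matrix (Fin 2) (Fin 2) (ZMod 2)) = v}

lemma card_fixedBy (n : ℕ) (A : SL2) :
    Nat.card (fixedBy (Matrix (Fin n) (Fin 2) (ZMod 2)) A) = c A⁻¹ ^ n := by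
  have e : fixedBy (Matrix (Fin n) (Fin 2) (ZMod 2)) A ≃
      (Fin n → {v : Fin 2 → ZMod 2 // v ᵥ* ((A⁻¹ : SL2) : Matrix (Fin 2) (Fin 2) (ZMod 2)) = v}) := by
    refine ⟨fun M i => ⟨M.1 i, ?_⟩, fun f => ⟨fun i => (f i).1, ?_⟩, fun M => rfl, fun f => rfl⟩
    · have h : M.1 * ((A⁻¹ : SL2) : Matrix (Fin 2) (Fin 2) (ZMod 2)) = M.1 := M.2
      rw [← Matrix.mul_apply_eq_vecMul, h]
    · show (Matrix.of fun i => (f i).1) * ((A⁻¹ : SL2) : Matrix (Fin 2) (Fin 2) (ZMod 2)) = Matrix.of fun i => (f i).1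
      funext i j
      have := congrFun (f i).2 j
      rw [Matrix.mul_apply_eq_vecMul] at *
      exact this
  rw [Nat.card_congr e, Nat.card_fun, Nat.card_eq_fintype_card (α := Fin n), Fintype.card_fin]
  rfl

instance : DecidableEq SL2 := fun a b => decidable_of_iff (a.1 = b.1) Subtype.ext_iff.symm

def g1 : SL2 := ⟨!![1,0;0,1], by decide⟩
def g2 : SL2 := ⟨!![0,1;1,0], by decide⟩
def g3 : SL2 := ⟨!![1,1;0,1], by decide⟩
def g4 : SL2 := ⟨!![1,0;1,1], by decide⟩
def g5 : SL2 := ⟨!![0,1;1,1], by decide⟩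
def g6 : SL2 := ⟨!![1,1;1,0], by decide⟩

lemma huniv : (Finset.univ : Finset SL2) = {g1,g2,g3,g4,g5,g6} := by decide

lemma cg1 : c g1 = 4 := by rw [c, Nat.card_eq_fintype_card]; decide
lemma cg2 : c g2 = 2 := by rw [c, Nat.card_eq_fintype_card]; decide
lemma cg3 : c g3 = 2 := by rw [c, Nat.card_eq_fintype_card]; decide
lemma cg4 : c g4 = 2 := by rw [c, Nat.card_eq_fintype_card]; decide
lemma cg5 : c g5 = 1 := by rw [c, Nat.card_eq_fintype_card]; decide
lemma cg6 : c g6 = 1 := by rw [c, Nat.card_eq_fintype_card]; decide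

lemma sum_c (n : ℕ) : ∑ A : SL2, c A ^ n = 4 ^ n + 3 * 2 ^ n + 2 := by
  rw [huniv]
  rw [Finset.sum_insert (by decide), Finset.sum_insert (by decide),
    Finset.sum_insert (by decide), Finset.sum_insert (by decide),
    Finset.sum_insert (by decide), Finset.sum_singleton]
  rw [cg1, cg2, cg3, cg4, cg5, cg6]
  ring

lemma cardSL2 : Fintype.card SL2 = 6 := by decide

theorem orbit_count_formula_mod_two (n : ℕ) (hn : 1 ≤ n) :
    3 * Nat.card (Quot (slOrbRel 2 n)) = (2 ^ n + 1) * (2 ^ (n - 1) + 1) := by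
  have hQ : Nat.card (Quot (slOrbRel 2 n)) =
      Fintype.card (orbitRel.Quotient SL2 (Matrix (Fin n) (Fin 2) (ZMod 2))) := by
    rw [rel_eq n]
    rw [← Nat.card_eq_fintype_card]
    exact Nat.card_congr (Equiv.cast rfl)
  have hb := MulAction.sum_card_fixedBy_eq_card_orbits_mul_card_group SL2
      (Matrix (Fin n) (Fin 2) (ZMod 2))
  rw [cardSL2] at hb
  have h1 : (∑ A : SL2, Fintype.card (fixedBy (Matrix (Fin n) (Fin 2) (ZMod 2)) A))
      = ∑ A : SL2, c A⁻¹ ^ n := by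
    refine Finset.sum_congr rfl fun A _ => ?_
    rw [← Nat.card_eq_fintype_card, card_fixedBy]
  have h2 : (∑ A : SL2, c A⁻¹ ^ n) = ∑ A : SL2, c A ^ n :=
    Fintype.sum_equiv (Equiv.inv SL2) _ _ (fun A => rfl)
  rw [h1, h2, sum_c] at hb
  set Q := Fintype.card (orbitRel.Quotient SL2 (Matrix (Fin n) (Fin 2) (ZMod 2))) with hQdef
  rw [hQ]
  set x := 2 ^ (n - 1) with hx
  have h2n : 2 ^ n = 2 * x := by
    rw [hx, ← pow_succ']
    congr 1
    omega
  have h4n : 4 ^ n = 4 * (x * x) := by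
    have : (4 : ℕ) ^ n = 2 ^ n * 2 ^ n := by
      rw [← Nat.mul_pow]
    rw [this, h2n]; ring
  rw [h2n, h4n] at hb
  have hrhs : (2 * x + 1) * (x + 1) = 2 * (x * x) + 3 * x + 1 := by ring
  rw [h2n, hrhs]
  generalize x * x = y at *
  omega
end

section
/- Let p be a prime and n ≥ 1. The set of (n+1)×2 matrices over ℤ/pℤ whose last row is nonzero is invariant under the right-multiplication action of SL(2, ℤ/pℤ), and the number of orbits of SL(2, ℤ/pℤ) on this set equals p^{n−1}(pⁿ + p − 1). -/
set_option linter.unusedSectionVars false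
set_option linter.unnecessarySeqFocus false
set_option linter.unnecessarySimpa false

open Matrix

namespace OrbCount
variable {p n : ℕ} [Fact p.Prime]

abbrev Mat (p n : ℕ) := Matrix (Fin (n + 1)) (Fin 2) (ZMod p)
abbrev SL (p : ℕ) := Matrix.SpecialLinearGroup (Fin 2) (ZMod p)

lemma mul_apply_two (M : Mat p n) (A : Matrix (Fin 2) (Fin 2) (ZMod p)) (i : Fin (n+1)) (k : Fin 2) :
    (M * A) i k = M i 0 * A 0 k + M i 1 * A 1 k := by
  simp [Matrix.mul_apply, Fin.sum_univ_two]

def IsCanon (M : Mat p n) : Prop :=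
  M (Fin.last n) 0 = 1 ∧ M (Fin.last n) 1 = 0 ∧
  ((∀ i : Fin n, M i.castSucc 1 = 0) ∨
   (∃ j : Fin n, M j.castSucc 1 ≠ 0 ∧ (∀ i, i < j → M i.castSucc 1 = 0) ∧ M j.castSucc 0 = 0))

lemma mul_coe_mul (M : Mat p n) (A B : SL p) :
    M * (A : Matrix (Fin 2) (Fin 2) (ZMod p)) * (B : Matrix (Fin 2) (Fin 2) (ZMod p))
      = M * ((A * B : SL p) : Matrix (Fin 2) (Fin 2) (ZMod p)) := by
  rw [Matrix.SpecialLinearGroup.coe_mul, Matrix.mul_assoc]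

lemma last_ne (M : Mat p n) (h : M (Fin.last n) ≠ 0) (A : SL p) :
    (M * (A : Matrix (Fin 2) (Fin 2) (ZMod p))) (Fin.last n) ≠ 0 := by
  intro h0
  apply h
  have hM : M * (A : Matrix (Fin 2) (Fin 2) (ZMod p)) *
      ((A⁻¹ : SL p) : Matrix (Fin 2) (Fin 2) (ZMod p)) = M := by
    rw [mul_coe_mul, mul_inv_cancel]
    simp
  funext k
  rw [← hM, mul_apply_two]
  have h00 : (M * (A : Matrix (Fin 2) (Fin 2) (ZMod p))) (Fin.last n) 0 = 0 := congrFun h0 0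
  have h01 : (M * (A : Matrix (Fin 2) (Fin 2) (ZMod p))) (Fin.last n) 1 = 0 := congrFun h0 1
  rw [h00, h01]
  simp

lemma exists_last_row_std (M : Mat p n) (h : M (Fin.last n) ≠ 0) :
    ∃ A : SL p, (M * (A : Matrix (Fin 2) (Fin 2) (ZMod p))) (Fin.last n) 0 = 1 ∧
      (M * (A : Matrix (Fin 2) (Fin 2) (ZMod p))) (Fin.last n) 1 = 0 := by
  set v0 := M (Fin.last n) 0 with hv0
  set v1 := M (Fin.last n) 1 with hv1
  by_cases h0 : v0 = 0
  · have h1 : v1 ≠ 0 := by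
      intro h1
      apply h
      funext k
      fin_cases k <;> simpa [← hv0, ← hv1] using by assumption
    refine ⟨⟨!![0, -v1; v1⁻¹, 0], by simp [Matrix.det_fin_two_of, mul_inv_cancel₀ h1]⟩, ?_, ?_⟩ <;>
      simp [mul_apply_two, ← hv0, ← hv1, h0, mul_inv_cancel₀ h1]
  · refine ⟨⟨!![v0⁻¹, -v1; 0, v0], by simp [Matrix.det_fin_two_of, inv_mul_cancel₀ h0]⟩, ?_, ?_⟩ <;>
      simp [mul_apply_two, ← hv0, ← hv1, mul_inv_cancel₀ h0, inv_mul_cancel₀ h0] <;> ring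

/-- the unipotent matrix [[1,0],[c,1]] as an element of SL2 -/
def uni (c : ZMod p) : SL p := ⟨!![1, 0; c, 1], by simp [Matrix.det_fin_two_of]⟩

lemma uni_apply (M : Mat p n) (c : ZMod p) (i : Fin (n+1)) :
    (M * ((uni c : SL p) : Matrix (Fin 2) (Fin 2) (ZMod p))) i 0 = M i 0 + M i 1 * c ∧
    (M * ((uni c : SL p) : Matrix (Fin 2) (Fin 2) (ZMod p))) i 1 = M i 1 := by
  constructor <;> simp [mul_apply_two, uni]

lemma exists_canon (M : Mat p n) (h : M (Fin.last n) ≠ 0) :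
    ∃ A : SL p, IsCanon (M * (A : Matrix (Fin 2) (Fin 2) (ZMod p))) := by
  obtain ⟨A, hA0, hA1⟩ := exists_last_row_std M h
  set M1 := M * (A : Matrix (Fin 2) (Fin 2) (ZMod p)) with hM1
  by_cases hb : ∀ i : Fin n, M1 i.castSucc 1 = 0
  · exact ⟨A, hA0, hA1, Or.inl hb⟩
  · push_neg at hb
    obtain ⟨j0, hj0⟩ := hb
    obtain ⟨j, hjmem, hjmin⟩ := Finset.exists_min_image
      (Finset.univ.filter (fun i : Fin n => M1 i.castSucc 1 ≠ 0)) id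
      ⟨j0, by simp [hj0]⟩
    simp only [Finset.mem_filter, Finset.mem_univ, true_and] at hjmem
    have hjmin' : ∀ i : Fin n, i < j → M1 i.castSucc 1 = 0 := by
      intro i hi
      by_contra hne
      exact absurd (hjmin i (by simp [hne])) (by simpa using hi)
    set c := -(M1 j.castSucc 0) * (M1 j.castSucc 1)⁻¹ with hc
    refine ⟨A * uni c, ?_⟩
    have hcoe : (((A * uni c : SL p)) : Matrix (Fin 2) (Fin 2) (ZMod p))
        = (A : Matrix (Fin 2) (Fin 2) (ZMod p)) * ((uni c : SL p) : Matrix (Fin 2) (Fin 2) (ZMod p)) := by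
      simp
    rw [hcoe, ← Matrix.mul_assoc, ← hM1]
    refine ⟨?_, ?_, Or.inr ⟨j, ?_, ?_, ?_⟩⟩
    · rw [(uni_apply M1 c _).1, hA0, hA1]; ring
    · rw [(uni_apply M1 c _).2]; exact hA1
    · rw [(uni_apply M1 c _).2]; exact hjmem
    · intro i hi; rw [(uni_apply M1 c _).2]; exact hjmin' i hi
    · rw [(uni_apply M1 c _).1, hc]
      field_simp
      ring

lemma canon_unique (M : Mat p n) (A : SL p) (hM : IsCanon M)
    (hN : IsCanon (M * (A : Matrix (Fin 2) (Fin 2) (ZMod p)))) :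
    M * (A : Matrix (Fin 2) (Fin 2) (ZMod p)) = M := by
  obtain ⟨hM0, hM1, hMc⟩ := hM
  obtain ⟨hN0, hN1, hNc⟩ := hN
  have e0 : (A : Matrix (Fin 2) (Fin 2) (ZMod p)) 0 0 = 1 := by
    have := hN0; rw [mul_apply_two, hM0, hM1] at this; simpa using this
  have e1 : (A : Matrix (Fin 2) (Fin 2) (ZMod p)) 0 1 = 0 := by
    have := hN1; rw [mul_apply_two, hM0, hM1] at this; simpa using this
  have hdet : (A : Matrix (Fin 2) (Fin 2) (ZMod p)).det = 1 := A.2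
  rw [Matrix.det_fin_two, e0, e1] at hdet
  have e3 : (A : Matrix (Fin 2) (Fin 2) (ZMod p)) 1 1 = 1 := by
    rw [one_mul, zero_mul, sub_zero] at hdet; exact hdet
  set c := (A : Matrix (Fin 2) (Fin 2) (ZMod p)) 1 0 with hcdef
  have col1 : ∀ i, (M * (A : Matrix (Fin 2) (Fin 2) (ZMod p))) i 1 = M i 1 := by
    intro i; rw [mul_apply_two, e1, e3]; ring
  have col0 : ∀ i, (M * (A : Matrix (Fin 2) (Fin 2) (ZMod p))) i 0 = M i 0 + M i 1 * c := by
    intro i; rw [mul_apply_two, e0, ← hcdef]; ring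
  have key : ∀ i, M i 1 * c = 0 := by
    rcases hMc with hall | ⟨j, hj, hjmin, hja⟩
    · intro i
      induction i using Fin.lastCases with
      | last => rw [hM1]; ring
      | cast i => rw [hall i]; ring
    · rcases hNc with hall' | ⟨j', hj', hjmin', hja'⟩
      · exact absurd (by rw [← col1 j.castSucc]; exact hall' j) hj
      · have hjj : j = j' := by
          rw [col1] at hj'
          simp only [col1] at hjmin'
          have h1 : ¬ j < j' := fun h => hj (hjmin' j h)
          have h2 : ¬ j' < j := fun h => hj' (hjmin j' h)
          omega
        subst hjj
        rw [col0, hja, zero_add] at hja'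
        intro i
        rcases mul_eq_zero.1 hja' with h | h
        · exact absurd h hj
        · rw [h, mul_zero]
  have hfin : ∀ k : Fin 2, ∀ i, (M * (A : Matrix (Fin 2) (Fin 2) (ZMod p))) i k = M i k := by
    rw [Fin.forall_fin_two]
    exact ⟨fun i => by rw [col0, key, add_zero], col1⟩
  ext i k
  exact hfin k i

lemma canon_ne (M : Mat p n) (h : IsCanon M) : M (Fin.last n) ≠ 0 := by
  intro h0
  have h1 : (1 : ZMod p) = 0 := by
    rw [← h.1]
    exact congrFun h0 0
  exact one_ne_zero h1

noncomputable def toCanonFun (M : {M : Mat p n // M (Fin.last n) ≠ 0}) :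
    {M : Mat p n // IsCanon M} :=
  ⟨(M : Mat p n) * ((Classical.choose (exists_canon M.1 M.2) : SL p) :
      Matrix (Fin 2) (Fin 2) (ZMod p)),
    Classical.choose_spec (exists_canon M.1 M.2)⟩

lemma toCanonFun_resp (M N : {M : Mat p n // M (Fin.last n) ≠ 0})
    (h : ∃ A : SL p, (M : Mat p n) * (A : Matrix (Fin 2) (Fin 2) (ZMod p)) = (N : Mat p n)) :
    toCanonFun M = toCanonFun N := by
  obtain ⟨A, hA⟩ := h
  set B := Classical.choose (exists_canon M.1 M.2) with hB
  set C := Classical.choose (exists_canon N.1 N.2) with hC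
  have hBc : IsCanon (M.1 * (B : Matrix (Fin 2) (Fin 2) (ZMod p))) :=
    Classical.choose_spec (exists_canon M.1 M.2)
  have hCc : IsCanon (N.1 * (C : Matrix (Fin 2) (Fin 2) (ZMod p))) :=
    Classical.choose_spec (exists_canon N.1 N.2)
  apply Subtype.ext
  show M.1 * (B : Matrix (Fin 2) (Fin 2) (ZMod p)) = N.1 * (C : Matrix (Fin 2) (Fin 2) (ZMod p))
  have key : (M.1 * (B : Matrix (Fin 2) (Fin 2) (ZMod p))) *
      ((B⁻¹ * (A * C) : SL p) : Matrix (Fin 2) (Fin 2) (ZMod p))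
        = N.1 * (C : Matrix (Fin 2) (Fin 2) (ZMod p)) := by
    rw [mul_coe_mul, mul_inv_cancel_left, ← hA, mul_coe_mul]
  have huniq := canon_unique (M.1 * (B : Matrix (Fin 2) (Fin 2) (ZMod p))) (B⁻¹ * (A * C)) hBc
    (by rw [key]; exact hCc)
  rw [key] at huniq
  exact huniq.symm

noncomputable def quotEquiv (p n : ℕ) [Fact p.Prime] :
    Quot (fun (M N : {M : Mat p n // M (Fin.last n) ≠ 0}) =>
      ∃ A : SL p, (M : Mat p n) * (A : Matrix (Fin 2) (Fin 2) (ZMod p)) = (N : Mat p n)) ≃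
    {M : Mat p n // IsCanon M} where
  toFun := Quot.lift toCanonFun toCanonFun_resp
  invFun C := Quot.mk _ ⟨C.1, canon_ne C.1 C.2⟩
  left_inv := by
    apply Quot.ind
    intro M
    apply Quot.sound
    refine ⟨(Classical.choose (exists_canon M.1 M.2))⁻¹, ?_⟩
    show (M.1 * _) * _ = M.1
    rw [mul_coe_mul, mul_inv_cancel]
    simp
  right_inv C := Subtype.ext (canon_unique C.1 _ C.2
    (Classical.choose_spec (exists_canon C.1 (canon_ne C.1 C.2))))

def Cond (b a : Fin n → ZMod p) : Prop :=
  (∀ i, b i = 0) ∨ ∃ j, b j ≠ 0 ∧ (∀ i, i < j → b i = 0) ∧ a j = 0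

/-- canonical matrices correspond to pairs (b, a) satisfying Cond -/
def canonEquiv : {M : Mat p n // IsCanon M} ≃
    {x : (Fin n → ZMod p) × (Fin n → ZMod p) // Cond x.1 x.2} where
  toFun M := ⟨(fun i => M.1 i.castSucc 1, fun i => M.1 i.castSucc 0), by
    rcases M.2.2.2 with h | ⟨j, h1, h2, h3⟩
    · exact Or.inl h
    · exact Or.inr ⟨j, h1, h2, h3⟩⟩
  invFun x := ⟨Matrix.of (Fin.lastCases ![1, 0] (fun i => ![x.1.2 i, x.1.1 i])), by
    refine ⟨by simp, by simp, ?_⟩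
    rcases x.2 with h | ⟨j, h1, h2, h3⟩
    · exact Or.inl (fun i => by simp [h i])
    · exact Or.inr ⟨j, by simpa using h1, fun i hi => by simpa using h2 i hi, by simpa using h3⟩⟩
  left_inv M := by
    apply Subtype.ext
    ext i k
    induction i using Fin.lastCases with
    | last =>
      have hk : ∀ k : Fin 2, (Matrix.of (Fin.lastCases ![1, 0]
          (fun i => ![M.1 i.castSucc 0, M.1 i.castSucc 1])) : Mat p n) (Fin.last n) k
            = M.1 (Fin.last n) k := by
        rw [Fin.forall_fin_two]
        constructor <;> simp [M.2.1, M.2.2.1]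
      exact hk k
    | cast i =>
      have hk : ∀ k : Fin 2, (Matrix.of (Fin.lastCases ![1, 0]
          (fun i => ![M.1 i.castSucc 0, M.1 i.castSucc 1])) : Mat p n) i.castSucc k
            = M.1 i.castSucc k := by
        rw [Fin.forall_fin_two]
        constructor <;> simp
      exact hk k
  right_inv x := by
    apply Subtype.ext
    apply Prod.ext <;> funext i <;> simp

lemma card_vanish (j : Fin n) : Nat.card {a : Fin n → ZMod p // a j = 0} = p ^ (n - 1) := by
  have e : {a : Fin n → ZMod p // a j = 0} ≃ ({i : Fin n // i ≠ j} → ZMod p) :=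
    { toFun := fun a i => a.1 i.1
      invFun := fun f => ⟨fun i => if h : i = j then 0 else f ⟨i, h⟩, by simp⟩
      left_inv := by
        intro a
        apply Subtype.ext
        funext i
        by_cases h : i = j
        · subst h; simpa using a.2.symm
        · simp [h]
      right_inv := by
        intro f
        funext i
        simp [i.2] }
  rw [Nat.card_congr e, Nat.card_eq_fintype_card, Fintype.card_fun, ZMod.card]
  congr 1
  have : Fintype.card {i : Fin n // ¬ i = j} = n - 1 := by
    rw [Fintype.card_subtype_compl, Fintype.card_subtype_eq, Fintype.card_fin]
  simpa [Ne] using this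

lemma card_cond_zero (b : Fin n → ZMod p) (hb : ∀ i, b i = 0) :
    Nat.card {a : Fin n → ZMod p // Cond b a} = p ^ n := by
  have e : {a : Fin n → ZMod p // Cond b a} ≃ (Fin n → ZMod p) :=
    Equiv.subtypeUnivEquiv (fun a => Or.inl hb)
  rw [Nat.card_congr e, Nat.card_eq_fintype_card, Fintype.card_fun, ZMod.card, Fintype.card_fin]

lemma card_cond_ne (b : Fin n → ZMod p) (hb : ¬ ∀ i, b i = 0) :
    Nat.card {a : Fin n → ZMod p // Cond b a} = p ^ (n - 1) := by
  push_neg at hb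
  obtain ⟨j0, hj0⟩ := hb
  obtain ⟨j, hjmem, hjmin⟩ := Finset.exists_min_image
    (Finset.univ.filter (fun i : Fin n => b i ≠ 0)) id ⟨j0, by simp [hj0]⟩
  simp only [Finset.mem_filter, Finset.mem_univ, true_and] at hjmem
  have hjmin' : ∀ i : Fin n, i < j → b i = 0 := by
    intro i hi
    by_contra hne
    exact absurd (hjmin i (by simp [hne])) (by simpa using hi)
  have e : {a : Fin n → ZMod p // Cond b a} ≃ {a : Fin n → ZMod p // a j = 0} := by
    apply Equiv.subtypeEquivRight
    intro a
    constructor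
    · rintro (hall | ⟨j', hj', hmin', ha'⟩)
      · exact absurd (hall j) hjmem
      · have : j = j' := by
          have h1 : ¬ j < j' := fun h => hjmem (hmin' j h)
          have h2 : ¬ j' < j := fun h => hj' (hjmin' j' h)
          omega
        rw [this]; exact ha'
    · intro h
      exact Or.inr ⟨j, hjmem, hjmin', h⟩
  rw [Nat.card_congr e, card_vanish]

lemma card_sigma_cond (hn : 1 ≤ n) :
    Nat.card {x : (Fin n → ZMod p) × (Fin n → ZMod p) // Cond x.1 x.2} =
      p ^ (n - 1) * (p ^ n + p - 1) := by
  classical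
  have hp : 2 ≤ p := (Fact.out : p.Prime).two_le
  rw [Nat.card_congr (Equiv.subtypeProdEquivSigmaSubtype Cond), Nat.card_eq_fintype_card,
    Fintype.card_sigma]
  have hsum : ∀ b : Fin n → ZMod p,
      Nat.card {a : Fin n → ZMod p // Cond b a} = if b = 0 then p ^ n else p ^ (n - 1) := by
    intro b
    by_cases hb : b = 0
    · rw [if_pos hb]
      exact card_cond_zero b (fun i => by rw [hb]; rfl)
    · rw [if_neg hb]
      apply card_cond_ne
      intro hall
      exact hb (funext hall)
  rw [Finset.sum_congr rfl (fun b _ => (Nat.card_eq_fintype_card.symm.trans (hsum b) : _))]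
  rw [← Finset.add_sum_erase Finset.univ _ (Finset.mem_univ (0 : Fin n → ZMod p))]
  rw [if_pos rfl]
  have hconst : ∀ b ∈ Finset.univ.erase (0 : Fin n → ZMod p),
      (if b = 0 then p ^ n else p ^ (n - 1)) = p ^ (n - 1) := by
    intro b hb
    rw [if_neg (Finset.mem_erase.1 hb).1]
  rw [Finset.sum_congr rfl hconst, Finset.sum_const, Finset.card_erase_of_mem (Finset.mem_univ _),
    Finset.card_univ, Fintype.card_fun, ZMod.card, Fintype.card_fin, smul_eq_mul]
  have hx : 1 ≤ p ^ (n - 1) := Nat.one_le_pow _ _ (by omega)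
  have hpn : p ^ n = p ^ (n - 1) * p := by rw [← pow_succ]; congr 1; omega
  set x := p ^ (n - 1)
  rw [hpn]
  have h1 : 1 ≤ x * p := Nat.one_le_iff_ne_zero.2 (by positivity)
  zify [h1, show (1:ℕ) ≤ x * p + p by omega]
  ring

end OrbCount

theorem orbits_on_matrices_with_nonzero_last_row (p n : ℕ) [Fact p.Prime] (hn : 1 ≤ n) :
    -- the set of matrices with nonzero last row is invariant under right multiplication
    (∀ M : Matrix (Fin (n + 1)) (Fin 2) (ZMod p), M (Fin.last n) ≠ 0 →
      ∀ A : Matrix.SpecialLinearGroup (Fin 2) (ZMod p),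
        (M * (A : Matrix (Fin 2) (Fin 2) (ZMod p))) (Fin.last n) ≠ 0) ∧
    -- and the number of orbits on this set is p^(n-1) * (p^n + p - 1)
    Nat.card (Quot (fun (M N : {M : Matrix (Fin (n + 1)) (Fin 2) (ZMod p) //
          M (Fin.last n) ≠ 0}) =>
        ∃ A : Matrix.SpecialLinearGroup (Fin 2) (ZMod p),
          (M : Matrix (Fin (n + 1)) (Fin 2) (ZMod p)) * (A : Matrix (Fin 2) (Fin 2) (ZMod p))
            = (N : Matrix (Fin (n + 1)) (Fin 2) (ZMod p)))) =
      p ^ (n - 1) * (p ^ n + p - 1) := by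
  refine ⟨fun M hM A => OrbCount.last_ne M hM A, ?_⟩
  have e := (OrbCount.quotEquiv p n).trans OrbCount.canonEquiv
  rw [Nat.card_congr e, OrbCount.card_sigma_cond hn]
end

section
/- For every n ≥ 1, the number of subgroups of the dihedral group D_{2n} of order 2n equals τ(n) + σ(n), where τ(n) is the number of positive divisors of n and σ(n) is the sum of the positive divisors of n. -/
open AddSubgroup

variable {n : ℕ}

private lemma zmod_mem_zmult [NeZero n] {d : ℕ} (hd : d ∣ n) (hd0 : 0 < d) (x : ZMod n)
    (h : d • x = 0) : x ∈ zmultiples ((n / d : ℕ) : ZMod n) := by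
  have hx : ((x.val : ℕ) : ZMod n) = x := ZMod.natCast_zmod_val x
  have h2 : ((d * x.val : ℕ) : ZMod n) = 0 := by
    push_cast
    rw [hx]
    simpa [nsmul_eq_mul] using h
  have h3 : n ∣ d * x.val := (ZMod.natCast_eq_zero_iff _ _).mp h2
  have h4 : n / d ∣ x.val := by
    obtain ⟨k, hk⟩ := h3
    have hnd : d * (n / d) = n := Nat.mul_div_cancel' hd
    refine ⟨k, ?_⟩
    have h5 : d * x.val = d * (n / d * k) := by rw [hk, ← mul_assoc, hnd]
    exact Nat.eq_of_mul_eq_mul_left hd0 h5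
  obtain ⟨k, hk⟩ := h4
  rw [← hx, hk]
  refine mem_zmultiples_iff.mpr ⟨(k : ℤ), ?_⟩
  push_cast
  simp [zsmul_eq_mul, mul_comm]

private lemma card_zmult [NeZero n] {d : ℕ} (hd : d ∣ n) :
    Nat.card (zmultiples ((n / d : ℕ) : ZMod n)) = d := by
  rw [Nat.card_zmultiples, ZMod.addOrderOf_coe _ (NeZero.ne n),
    Nat.gcd_eq_right (Nat.div_dvd_of_dvd hd),
    Nat.div_div_self hd (NeZero.ne n)]

private lemma eq_zmult [NeZero n] (A : AddSubgroup (ZMod n)) :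
    A = zmultiples ((n / Nat.card A : ℕ) : ZMod n) := by
  have hd : Nat.card A ∣ n := by
    simpa [Nat.card_zmod] using A.card_addSubgroup_dvd_card
  have hd0 : 0 < Nat.card A := Nat.card_pos
  have hle : A ≤ zmultiples ((n / Nat.card A : ℕ) : ZMod n) := by
    intro x hx
    refine zmod_mem_zmult hd hd0 x ?_
    have h0 : Nat.card A • (⟨x, hx⟩ : A) = 0 := card_nsmul_eq_zero'
    exact congrArg Subtype.val h0
  have hcard : Nat.card (zmultiples ((n / Nat.card A : ℕ) : ZMod n)) ≤ Nat.card A :=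
    (card_zmult hd).le
  refine SetLike.ext' (Set.eq_of_subset_of_ncard_le hle ?_ (Set.toFinite _))
  rwa [← Nat.card_coe_set_eq, ← Nat.card_coe_set_eq]

private noncomputable def subEquiv [NeZero n] :
    AddSubgroup (ZMod n) ≃ {d : ℕ // d ∈ n.divisors} where
  toFun A := ⟨Nat.card A, Nat.mem_divisors.mpr
    ⟨by simpa [Nat.card_zmod] using A.card_addSubgroup_dvd_card, NeZero.ne n⟩⟩
  invFun d := zmultiples ((n / d.1 : ℕ) : ZMod n)
  left_inv A := (eq_zmult A).symm
  right_inv d := by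
    ext
    exact card_zmult (Nat.mem_divisors.mp d.2).1

open AddSubgroup DihedralGroup

variable {n : ℕ}

private def rotSet (H : Subgroup (DihedralGroup n)) : AddSubgroup (ZMod n) where
  carrier := {i | r i ∈ H}
  zero_mem' := H.one_mem
  add_mem' := fun {a b} ha hb => by
    have := H.mul_mem ha hb
    simpa using this
  neg_mem' := fun {a} ha => H.inv_mem ha

private lemma mem_rotSet {H : Subgroup (DihedralGroup n)} {i : ZMod n} :
    i ∈ rotSet H ↔ r i ∈ H := Iff.rfl

private lemma sr_mem_iff {H : Subgroup (DihedralGroup n)} {j : ZMod n} (hj : sr j ∈ H)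
    (a : ZMod n) : sr a ∈ H ↔ a - j ∈ rotSet H := by
  constructor
  · intro ha
    have := H.mul_mem hj ha
    simpa [mem_rotSet] using this
  · intro ha
    have := H.mul_mem hj (mem_rotSet.mp ha)
    simpa using this

private def rotSub (A : AddSubgroup (ZMod n)) : Subgroup (DihedralGroup n) where
  carrier := {x | ∃ i ∈ A, x = r i}
  one_mem' := ⟨0, A.zero_mem, rfl⟩
  mul_mem' := by
    rintro _ _ ⟨i, hi, rfl⟩ ⟨k, hk, rfl⟩
    exact ⟨i + k, A.add_mem hi hk, rfl⟩
  inv_mem' := by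
    rintro _ ⟨i, hi, rfl⟩
    exact ⟨-i, A.neg_mem hi, rfl⟩

private def dihSub (A : AddSubgroup (ZMod n)) (j : ZMod n) : Subgroup (DihedralGroup n) where
  carrier := {x | (∃ i ∈ A, x = r i) ∨ ∃ i ∈ A, x = sr (j + i)}
  one_mem' := Or.inl ⟨0, A.zero_mem, rfl⟩
  mul_mem' := by
    rintro _ _ (⟨i, hi, rfl⟩ | ⟨i, hi, rfl⟩) (⟨k, hk, rfl⟩ | ⟨k, hk, rfl⟩)
    · exact Or.inl ⟨i + k, A.add_mem hi hk, rfl⟩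
    · exact Or.inr ⟨k - i, A.sub_mem hk hi, by rw [r_mul_sr]; ring_nf⟩
    · exact Or.inr ⟨i + k, A.add_mem hi hk, by rw [sr_mul_r]; ring_nf⟩
    · exact Or.inl ⟨k - i, A.sub_mem hk hi, by rw [sr_mul_sr]; ring_nf⟩
  inv_mem' := by
    rintro _ (⟨i, hi, rfl⟩ | ⟨i, hi, rfl⟩)
    · exact Or.inl ⟨-i, A.neg_mem hi, rfl⟩
    · exact Or.inr ⟨i, hi, rfl⟩

private lemma rotSet_rotSub (A : AddSubgroup (ZMod n)) : rotSet (rotSub A) = A := by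
  ext i
  simp [mem_rotSet, rotSub, Subgroup.mem_mk]

private lemma sr_notMem_rotSub (A : AddSubgroup (ZMod n)) (a : ZMod n) :
    sr a ∉ rotSub A := by
  rintro ⟨i, hi, h⟩
  exact absurd h (by simp)

private lemma rotSet_dihSub (A : AddSubgroup (ZMod n)) (j : ZMod n) :
    rotSet (dihSub A j) = A := by
  ext i
  constructor
  · rintro (⟨k, hk, h⟩ | ⟨k, hk, h⟩)
    · obtain rfl : i = k := by injection h
      exact hk
    · exact absurd h (by simp)
  · intro hi
    exact Or.inl ⟨i, hi, rfl⟩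

private lemma sr_mem_dihSub {A : AddSubgroup (ZMod n)} {j a : ZMod n} :
    sr a ∈ dihSub A j ↔ a - j ∈ A := by
  constructor
  · rintro (⟨k, hk, h⟩ | ⟨k, hk, h⟩)
    · exact absurd h (by simp)
    · obtain rfl : a = j + k := by injection h
      simpa using hk
  · intro h
    exact Or.inr ⟨a - j, h, by ring_nf⟩

private lemma subgroup_ext {H1 H2 : Subgroup (DihedralGroup n)} (h1 : rotSet H1 = rotSet H2)
    (h2 : ∀ a, sr a ∈ H1 ↔ sr a ∈ H2) : H1 = H2 := by
  ext x
  rcases x with i | a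
  · exact SetLike.ext_iff.mp h1 i
  · exact h2 a

open scoped Classical in
private noncomputable def F (H : Subgroup (DihedralGroup n)) :
    Σ A : AddSubgroup (ZMod n), Option (ZMod n ⧸ A) :=
  ⟨rotSet H, if h : ∃ j, sr j ∈ H then some (QuotientAddGroup.mk h.choose) else none⟩

private noncomputable def G :
    (Σ A : AddSubgroup (ZMod n), Option (ZMod n ⧸ A)) → Subgroup (DihedralGroup n)
  | ⟨A, none⟩ => rotSub A
  | ⟨A, some q⟩ => dihSub A q.out

private lemma GF (H : Subgroup (DihedralGroup n)) : G (F H) = H := by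
  by_cases h : ∃ j, sr j ∈ H
  · unfold F
    rw [dif_pos h]
    show dihSub (rotSet H) (QuotientAddGroup.mk (s := rotSet H) h.choose).out = H
    have hsr : sr h.choose ∈ H := h.choose_spec
    set j1 := (QuotientAddGroup.mk (s := rotSet H) h.choose).out with hj1
    have hmk : QuotientAddGroup.mk (s := rotSet H) j1 = QuotientAddGroup.mk h.choose := by
      rw [hj1, QuotientAddGroup.out_eq']
    have hj1mem : -j1 + h.choose ∈ rotSet H := QuotientAddGroup.eq.mp hmk
    have hsr1 : sr j1 ∈ H := by
      rw [sr_mem_iff hsr]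
      have := (rotSet H).neg_mem hj1mem
      simpa [neg_add_rev, sub_eq_add_neg, add_comm] using this
    refine subgroup_ext (rotSet_dihSub _ _) fun a => ?_
    rw [show (sr a ∈ dihSub (rotSet H) j1) ↔ a - j1 ∈ rotSet H from sr_mem_dihSub]
    exact (sr_mem_iff hsr1 a).symm
  · unfold F
    rw [dif_neg h]
    show rotSub (rotSet H) = H
    refine subgroup_ext (rotSet_rotSub _) fun a => ?_
    exact iff_of_false (sr_notMem_rotSub _ a) (fun ha => h ⟨a, ha⟩)

private lemma sigma_eq_none {A B : AddSubgroup (ZMod n)} (h : A = B) :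
    (⟨A, none⟩ : Σ C : AddSubgroup (ZMod n), Option (ZMod n ⧸ C)) = ⟨B, none⟩ := by
  subst h; rfl

private lemma sigma_eq_some {A B : AddSubgroup (ZMod n)} (h : A = B) (a : ZMod n)
    (q : ZMod n ⧸ B) (hq : QuotientAddGroup.mk (s := B) a = q) :
    (⟨A, some (QuotientAddGroup.mk (s := A) a)⟩ :
      Σ C : AddSubgroup (ZMod n), Option (ZMod n ⧸ C)) = ⟨B, some q⟩ := by
  subst h; rw [hq]

private lemma FG (x : Σ A : AddSubgroup (ZMod n), Option (ZMod n ⧸ A)) : F (G x) = x := by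
  obtain ⟨A, _ | q⟩ := x
  · show F (rotSub A) = _
    unfold F
    rw [dif_neg (by push_neg; exact fun j => sr_notMem_rotSub A j)]
    exact sigma_eq_none (rotSet_rotSub A)
  · show F (dihSub A q.out) = _
    have hex : ∃ j, sr j ∈ dihSub A q.out :=
      ⟨q.out, sr_mem_dihSub.mpr (by simpa using A.zero_mem)⟩
    unfold F
    rw [dif_pos hex]
    have hch : hex.choose - q.out ∈ A := sr_mem_dihSub.mp hex.choose_spec
    have h2 : QuotientAddGroup.mk (s := A) hex.choose = q := by
      have h3 : q.out - hex.choose ∈ A := by simpa [neg_sub] using A.neg_mem hch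
      have h4 : QuotientAddGroup.mk (s := A) hex.choose = QuotientAddGroup.mk (s := A) q.out :=
        QuotientAddGroup.eq.mpr (by rwa [neg_add_eq_sub])
      rw [h4, QuotientAddGroup.out_eq']
    have h1 : rotSet (dihSub A q.out) = A := rotSet_dihSub A q.out
    exact sigma_eq_some h1 hex.choose q h2

theorem num_subgroups_dihedral (n : ℕ) (hn : 1 ≤ n) :
    Nat.card (Subgroup (DihedralGroup n)) = n.divisors.card + ∑ d ∈ n.divisors, d := by
  have hnz : NeZero n := ⟨by omega⟩
  classical
  let e : Subgroup (DihedralGroup n) ≃ Σ A : AddSubgroup (ZMod n), Option (ZMod n ⧸ A) :=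
    ⟨F, G, GF, FG⟩
  rw [Nat.card_congr e]
  letI : Fintype (AddSubgroup (ZMod n)) := Fintype.ofFinite _
  letI : ∀ A : AddSubgroup (ZMod n), Fintype (ZMod n ⧸ A) := fun A => Fintype.ofFinite _
  rw [Nat.card_eq_fintype_card, Fintype.card_sigma]
  have hterm : ∀ A : AddSubgroup (ZMod n),
      Fintype.card (Option (ZMod n ⧸ A)) = n / Nat.card A + 1 := by
    intro A
    rw [Fintype.card_option]
    congr 1
    rw [← Nat.card_eq_fintype_card]
    have hmul := AddSubgroup.card_eq_card_quotient_mul_card_addSubgroup A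
    rw [Nat.card_zmod] at hmul
    have hA : 0 < Nat.card A := Nat.card_pos
    exact (Nat.div_eq_of_eq_mul_left hA hmul).symm
  simp_rw [hterm]
  rw [Finset.sum_add_distrib, Finset.sum_const, Finset.card_univ, smul_eq_mul, mul_one]
  have hcard : Fintype.card (AddSubgroup (ZMod n)) = n.divisors.card := by
    rw [Fintype.card_congr subEquiv, Fintype.card_coe]
  have hsum : ∑ A : AddSubgroup (ZMod n), n / Nat.card A = ∑ d ∈ n.divisors, d := by
    rw [Fintype.sum_equiv subEquiv (fun A => n / Nat.card ↥A) (fun d => n / d.1) (fun A => rfl),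
      Finset.sum_coe_sort n.divisors (fun d => n / d)]
    simpa using Nat.sum_div_divisors n id
  rw [hcard, hsum, Nat.add_comm]
end

section
/- For every n ≥ 1, the number of subgroups of the dicyclic group Dic_n of order 4n equals τ(2n) + σ(n), where τ(2n) is the number of positive divisors of 2n and σ(n) is the sum of the positive divisors of n. -/
open AddSubgroup

lemma zmod_card_zmultiples (m d : ℕ) (hm : m ≠ 0) (hd : d ∣ m) :
    Nat.card (zmultiples ((d : ℕ) : ZMod m)) = m / d := by
  rw [Nat.card_zmultiples, ZMod.addOrderOf_coe d hm, Nat.gcd_eq_right hd]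

lemma zmod_zmultiples_inj (m : ℕ) (hm : m ≠ 0) {d₁ d₂ : ℕ} (h₁ : d₁ ∣ m) (h₂ : d₂ ∣ m)
    (h : zmultiples ((d₁ : ℕ) : ZMod m) = zmultiples ((d₂ : ℕ) : ZMod m)) : d₁ = d₂ := by
  have hc : m / d₁ = m / d₂ := by
    rw [← zmod_card_zmultiples m d₁ hm h₁, ← zmod_card_zmultiples m d₂ hm h₂, h]
  rw [← Nat.div_div_self h₁ hm, hc, Nat.div_div_self h₂ hm]

lemma zmod_mem_zmultiples_iff (m k d : ℕ) (hm : m ≠ 0) (hd : d ∣ m) :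
    ((k : ZMod m) ∈ zmultiples ((d : ℕ) : ZMod m)) ↔ d ∣ k := by
  constructor
  · rintro ⟨c, hc⟩
    simp only [zsmul_eq_mul] at hc
    have : ((c * d : ℤ) : ZMod m) = ((k : ℤ) : ZMod m) := by
      push_cast
      rw [← hc]
    rw [ZMod.intCast_eq_intCast_iff] at this
    have h2 : (m : ℤ) ∣ c * d - k := Int.ModEq.dvd this.symm
    have h3 : (d : ℤ) ∣ c * d - k := dvd_trans (Int.natCast_dvd_natCast.mpr hd) h2
    have h4 : (d : ℤ) ∣ (k : ℤ) := by
      have := dvd_sub (Dvd.intro_left c rfl) h3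
      simpa using this
    exact_mod_cast h4
  · rintro ⟨c, rfl⟩
    exact ⟨(c : ℤ), by push_cast; rw [zsmul_eq_mul]; push_cast; ring⟩

lemma zmod_addSubgroup_classify (m : ℕ) (hm : m ≠ 0) (K : AddSubgroup (ZMod m)) :
    ∃ d ∈ m.divisors, K = zmultiples ((d : ℕ) : ZMod m) := by
  obtain ⟨a, ha⟩ := Int.subgroup_cyclic (K.comap (Int.castAddHom (ZMod m)))
  have hsurj : Function.Surjective (Int.castAddHom (ZMod m)) := ZMod.intCast_surjective
  have hK : K = (K.comap (Int.castAddHom (ZMod m))).map (Int.castAddHom (ZMod m)) :=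
    (AddSubgroup.map_comap_eq_self_of_surjective hsurj K).symm
  rw [ha, ← AddSubgroup.zmultiples_eq_closure] at hK
  have hmap : (zmultiples a).map (Int.castAddHom (ZMod m)) = zmultiples ((a : ZMod m)) := by
    ext x
    simp only [AddSubgroup.mem_map, mem_zmultiples_iff]
    constructor
    · rintro ⟨y, ⟨c, rfl⟩, rfl⟩; exact ⟨c, by simp⟩
    · rintro ⟨c, rfl⟩; exact ⟨c • a, ⟨c, rfl⟩, by simp⟩
  rw [hmap] at hK
  set g : ℕ := Int.gcd a m with hg
  refine ⟨g, Nat.mem_divisors.mpr ⟨?_, hm⟩, ?_⟩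
  · exact Int.natCast_dvd_natCast.mp (by exact_mod_cast Int.gcd_dvd_right (a := a) (b := (m : ℤ)))
  · rw [hK]
    apply le_antisymm
    · apply zmultiples_le_of_mem
      obtain ⟨c, hc⟩ : (g : ℤ) ∣ a := Int.gcd_dvd_left a (m : ℤ)
      rw [mem_zmultiples_iff]
      exact ⟨c, by rw [zsmul_eq_mul]; rw [hc]; push_cast; ring⟩
    · apply zmultiples_le_of_mem
      rw [mem_zmultiples_iff]
      have hb := Int.gcd_eq_gcd_ab a m
      refine ⟨Int.gcdA a m, ?_⟩
      rw [zsmul_eq_mul]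
      have : ((g : ℤ) : ZMod m) = ((a * Int.gcdA a m + m * Int.gcdB a m : ℤ) : ZMod m) := by
        rw [← hb]
      push_cast at this ⊢
      rw [this]
      simp [ZMod.natCast_self]
      ring

open AddSubgroup QuaternionGroup

variable {n : ℕ}

@[simp] lemma qg_inv_xa (i : ZMod (2*n)) : (xa i : QuaternionGroup n)⁻¹ = xa ((n : ZMod (2*n)) + i) := rfl
@[simp] lemma qg_inv_a (i : ZMod (2*n)) : (a i : QuaternionGroup n)⁻¹ = a (-i) := rfl

def aSub (K : AddSubgroup (ZMod (2*n))) : Subgroup (QuaternionGroup n) where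
  carrier := {x | match x with | .a i => i ∈ K | .xa _ => False}
  mul_mem' := by
    rintro (i|i) (j|j) hx hy
    · have hx' : i ∈ K := hx
      have hy' : j ∈ K := hy
      show i + j ∈ K
      exact add_mem hx' hy'
    · exact hy.elim
    · exact hx.elim
    · exact hx.elim
  one_mem' := by show (0 : ZMod (2*n)) ∈ K; exact zero_mem K
  inv_mem' := by
    rintro (i|i) hx
    · have hx' : i ∈ K := hx
      show -i ∈ K
      exact neg_mem hx'
    · exact hx.elim

@[simp] lemma mem_aSub_a {K : AddSubgroup (ZMod (2*n))} {i : ZMod (2*n)} :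
    (a i : QuaternionGroup n) ∈ aSub K ↔ i ∈ K := Iff.rfl

@[simp] lemma not_mem_aSub_xa {K : AddSubgroup (ZMod (2*n))} {i : ZMod (2*n)} :
    (xa i : QuaternionGroup n) ∉ aSub K := id

def xaSub (K : AddSubgroup (ZMod (2*n))) (hK : (n : ZMod (2*n)) ∈ K) (j : ZMod (2*n) ⧸ K) :
    Subgroup (QuaternionGroup n) where
  carrier := {x | match x with
    | .a i => i ∈ K
    | .xa i => (QuotientAddGroup.mk i : ZMod (2*n) ⧸ K) = j}
  mul_mem' := by
    rintro (i|i) (j'|j') hx hy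
    · have hx' : i ∈ K := hx
      have hy' : j' ∈ K := hy
      show i + j' ∈ K
      exact add_mem hx' hy'
    · show (QuotientAddGroup.mk (j' - i) : ZMod (2*n) ⧸ K) = j
      rw [QuotientAddGroup.mk_sub, (QuotientAddGroup.eq_zero_iff i).mpr hx, sub_zero]
      exact hy
    · show (QuotientAddGroup.mk (i + j') : ZMod (2*n) ⧸ K) = j
      rw [QuotientAddGroup.mk_add, (QuotientAddGroup.eq_zero_iff j').mpr hy, add_zero]
      exact hx
    · show (n : ZMod (2*n)) + j' - i ∈ K
      have hx' : (QuotientAddGroup.mk i : ZMod (2*n) ⧸ K) = j := hx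
      have hy' : (QuotientAddGroup.mk j' : ZMod (2*n) ⧸ K) = j := hy
      have h1 : j' - i ∈ K := by
        have := hx'.trans hy'.symm
        rwa [QuotientAddGroup.eq, neg_add_eq_sub] at this
      have := add_mem hK h1
      convert this using 1
      ring
  one_mem' := zero_mem K
  inv_mem' := by
    rintro (i|i) hx
    · have hx' : i ∈ K := hx
      show -i ∈ K
      exact neg_mem hx'
    · show (QuotientAddGroup.mk ((n : ZMod (2*n)) + i) : ZMod (2*n) ⧸ K) = j
      rw [QuotientAddGroup.mk_add, (QuotientAddGroup.eq_zero_iff _).mpr hK, zero_add]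
      exact hx

@[simp] lemma mem_xaSub_a {K : AddSubgroup (ZMod (2*n))} {hK} {j} {i : ZMod (2*n)} :
    (a i : QuaternionGroup n) ∈ xaSub K hK j ↔ i ∈ K := Iff.rfl

@[simp] lemma mem_xaSub_xa {K : AddSubgroup (ZMod (2*n))} {hK} {j} {i : ZMod (2*n)} :
    (xa i : QuaternionGroup n) ∈ xaSub K hK j ↔ (QuotientAddGroup.mk i : ZMod (2*n) ⧸ K) = j :=
  Iff.rfl

def classifyFun :
    (AddSubgroup (ZMod (2*n)) ⊕ Σ K : {K : AddSubgroup (ZMod (2*n)) // (n : ZMod (2*n)) ∈ K},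
      ZMod (2*n) ⧸ K.1) → Subgroup (QuaternionGroup n)
  | Sum.inl K => aSub K
  | Sum.inr ⟨K, j⟩ => xaSub K.1 K.2 j

lemma classifyFun_bijective : Function.Bijective (classifyFun (n := n)) := by
  constructor
  · rintro (K₁ | ⟨K₁, j₁⟩) (K₂ | ⟨K₂, j₂⟩) h <;> simp only [classifyFun] at h
    · congr 1
      ext i
      rw [← mem_aSub_a (n := n), ← mem_aSub_a (n := n), h]
    · exfalso
      obtain ⟨j₀, rfl⟩ := QuotientAddGroup.mk_surjective j₂
      have : (xa j₀ : QuaternionGroup n) ∈ aSub K₁ := by rw [h]; simp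
      exact not_mem_aSub_xa this
    · exfalso
      obtain ⟨j₀, rfl⟩ := QuotientAddGroup.mk_surjective j₁
      have : (xa j₀ : QuaternionGroup n) ∈ aSub K₂ := by rw [← h]; simp
      exact not_mem_aSub_xa this
    · have hKK : K₁ = K₂ := by
        apply Subtype.ext
        ext i
        rw [← mem_xaSub_a (n := n) (hK := K₁.2) (j := j₁),
          ← mem_xaSub_a (n := n) (hK := K₂.2) (j := j₂), h]
      subst hKK
      obtain ⟨j₀, rfl⟩ := QuotientAddGroup.mk_surjective j₁
      have : (xa j₀ : QuaternionGroup n) ∈ xaSub K₁.1 K₁.2 j₂ := by rw [← h]; simp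
      rw [mem_xaSub_xa] at this
      rw [this]
  · intro H
    by_cases hxa : ∃ j₀, (xa j₀ : QuaternionGroup n) ∈ H
    · obtain ⟨j₀, hj₀⟩ := hxa
      set K : AddSubgroup (ZMod (2*n)) :=
        { carrier := {i | (a i : QuaternionGroup n) ∈ H}
          add_mem' := fun {x y} hx hy => by
            have hx' : (a x : QuaternionGroup n) ∈ H := hx
            have hy' : (a y : QuaternionGroup n) ∈ H := hy
            simpa using mul_mem hx' hy'
          zero_mem' := by
            show (a 0 : QuaternionGroup n) ∈ H
            rw [← one_def]; exact one_mem H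
          neg_mem' := fun {x} hx => by
            have hx' : (a x : QuaternionGroup n) ∈ H := hx
            simpa using inv_mem hx' } with hKdef
      have hmemK : ∀ i : ZMod (2*n), i ∈ K ↔ (a i : QuaternionGroup n) ∈ H := fun i => Iff.rfl
      have hnK : (n : ZMod (2*n)) ∈ K := by
        rw [hmemK]
        have := mul_mem hj₀ hj₀
        simpa using this
      have hxaiff : ∀ i : ZMod (2*n), (xa i : QuaternionGroup n) ∈ H ↔ i - j₀ ∈ K := by
        intro i
        constructor
        · intro hi
          rw [hmemK]
          have h1 := mul_mem hj₀ hi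
          rw [xa_mul_xa] at h1
          have h2 := mul_mem (inv_mem (hmemK _ |>.mp hnK)) h1
          rw [qg_inv_a, a_mul_a] at h2
          convert h2 using 2
          ring
        · intro hi
          have h1 : (a ((n : ZMod (2*n)) + i - j₀) : QuaternionGroup n) ∈ H := by
            have := mul_mem ((hmemK _).mp hnK) ((hmemK _).mp hi)
            rw [a_mul_a] at this
            convert this using 2
            ring
          rw [← xa_mul_xa] at h1
          have := mul_mem (inv_mem hj₀) h1
          rwa [← mul_assoc, inv_mul_cancel, one_mul] at this
      refine ⟨Sum.inr ⟨⟨K, hnK⟩, QuotientAddGroup.mk j₀⟩, ?_⟩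
      simp only [classifyFun]
      ext x
      rcases x with i | i
      · rw [mem_xaSub_a]; exact (hmemK i).symm
      · rw [mem_xaSub_xa, QuotientAddGroup.eq, neg_add_eq_sub, ← sub_mem_comm_iff]
        exact (hxaiff i).symm
    · push_neg at hxa
      set K : AddSubgroup (ZMod (2*n)) :=
        { carrier := {i | (a i : QuaternionGroup n) ∈ H}
          add_mem' := fun {x y} hx hy => by
            have hx' : (a x : QuaternionGroup n) ∈ H := hx
            have hy' : (a y : QuaternionGroup n) ∈ H := hy
            simpa using mul_mem hx' hy'
          zero_mem' := by
            show (a 0 : QuaternionGroup n) ∈ H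
            rw [← one_def]; exact one_mem H
          neg_mem' := fun {x} hx => by
            have hx' : (a x : QuaternionGroup n) ∈ H := hx
            simpa using inv_mem hx' } with hKdef
      refine ⟨Sum.inl K, ?_⟩
      simp only [classifyFun]
      ext x
      rcases x with i | i
      · exact Iff.rfl
      · exact iff_of_false not_mem_aSub_xa (hxa i)

lemma zmod_card_quot (m d : ℕ) (hm : m ≠ 0) (hd : d ∣ m) :
    Nat.card (ZMod m ⧸ zmultiples ((d : ℕ) : ZMod m)) = d := by
  have h1 := AddSubgroup.card_eq_card_quotient_mul_card_addSubgroup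
    (zmultiples ((d : ℕ) : ZMod m))
  rw [Nat.card_zmod, zmod_card_zmultiples m d hm hd] at h1
  have h2 : d * (m / d) = m := Nat.mul_div_cancel' hd
  have h3 : m / d ≠ 0 := by
    intro h
    rw [h, mul_zero] at h2
    exact hm h2.symm
  exact Nat.eq_of_mul_eq_mul_right (Nat.pos_of_ne_zero h3) (h1.symm.trans h2.symm)

theorem num_subgroups_dicyclic (n : ℕ) (hn : 1 ≤ n) :
    Nat.card (Subgroup (QuaternionGroup n)) = (2 * n).divisors.card + ∑ d ∈ n.divisors, d := by
  haveI : NeZero n := ⟨by omega⟩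
  haveI : NeZero (2 * n) := ⟨by omega⟩
  have hm : 2 * n ≠ 0 := by omega
  have hn0 : n ≠ 0 := by omega
  classical
  rw [← Nat.card_congr (Equiv.ofBijective _ (classifyFun_bijective (n := n))), Nat.card_sum]
  congr 1
  · -- count of AddSubgroups
    have eA : {d : ℕ // d ∈ (2 * n).divisors} ≃ AddSubgroup (ZMod (2 * n)) := by
      refine Equiv.ofBijective (fun d => zmultiples ((d.1 : ℕ) : ZMod (2 * n))) ⟨?_, ?_⟩
      · rintro ⟨d₁, hd₁⟩ ⟨d₂, hd₂⟩ h
        exact Subtype.ext (zmod_zmultiples_inj (2 * n) hm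
          (Nat.mem_divisors.mp hd₁).1 (Nat.mem_divisors.mp hd₂).1 h)
      · intro K
        obtain ⟨d, hd, hKd⟩ := zmod_addSubgroup_classify (2 * n) hm K
        exact ⟨⟨d, hd⟩, hKd.symm⟩
    rw [← Nat.card_congr eA, Nat.card_eq_finsetCard]
  · -- count of the sigma type
    set S := {K : AddSubgroup (ZMod (2 * n)) // ((n : ℕ) : ZMod (2 * n)) ∈ K} with hS
    letI : Fintype S := Fintype.ofFinite _
    letI : ∀ K : S, Fintype (ZMod (2 * n) ⧸ K.1) := fun K => Fintype.ofFinite _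
    set e : {d : ℕ // d ∈ n.divisors} → S := fun d =>
      ⟨zmultiples ((d.1 : ℕ) : ZMod (2 * n)),
        (zmod_mem_zmultiples_iff (2 * n) n d.1 hm
          (dvd_mul_of_dvd_right (Nat.mem_divisors.mp d.2).1 2)).mpr
          (Nat.mem_divisors.mp d.2).1⟩ with he
    have hg : Function.Bijective e := by
      constructor
      · rintro ⟨d₁, hd₁⟩ ⟨d₂, hd₂⟩ h
        have h' : zmultiples ((d₁ : ℕ) : ZMod (2 * n)) = zmultiples ((d₂ : ℕ) : ZMod (2 * n)) :=
          congrArg Subtype.val h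
        exact Subtype.ext (zmod_zmultiples_inj (2 * n) hm
          (dvd_mul_of_dvd_right (Nat.mem_divisors.mp hd₁).1 2)
          (dvd_mul_of_dvd_right (Nat.mem_divisors.mp hd₂).1 2) h')
      · rintro ⟨K, hK⟩
        obtain ⟨d, hd, hKd⟩ := zmod_addSubgroup_classify (2 * n) hm K
        have hdvd : d ∣ n := by
          rw [hKd] at hK
          exact (zmod_mem_zmultiples_iff (2 * n) n d hm (Nat.mem_divisors.mp hd).1).mp hK
        exact ⟨⟨d, Nat.mem_divisors.mpr ⟨hdvd, hn0⟩⟩, Subtype.ext hKd.symm⟩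
    have hval : ∀ d : {d : ℕ // d ∈ n.divisors},
        Nat.card (ZMod (2 * n) ⧸ (e d).1) = d.1 := by
      rintro ⟨d, hd⟩
      show Nat.card (ZMod (2 * n) ⧸ zmultiples ((d : ℕ) : ZMod (2 * n))) = d
      exact zmod_card_quot (2 * n) d hm (dvd_mul_of_dvd_right (Nat.mem_divisors.mp hd).1 2)
    rw [Nat.card_eq_fintype_card, Fintype.card_sigma]
    have hcards : ∀ K : S,
        Fintype.card (ZMod (2 * n) ⧸ K.1) = Nat.card (ZMod (2 * n) ⧸ K.1) := fun K =>
      (Nat.card_eq_fintype_card).symm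
    simp_rw [hcards]
    rw [← Fintype.sum_bijective e hg (fun d => (d.1 : ℕ))
      (fun K => Nat.card (ZMod (2 * n) ⧸ K.1)) (fun d => (hval d).symm)]
    exact Finset.sum_coe_sort n.divisors (fun d => d)
end
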